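/- arXiv:1202.5407 — 4 statements merged into one kernel-verified Lean document; each statement's English description precedes it below -/
import Mathlib

section
/- For every continuously differentiable map M_f : [ω_*, ω^*] → S², there exists a continuously differentiable map R : [ω_*, ω^*] → SO(3) (real 3×3 special orthogonal matrices) such that R(ω) M_f(ω) = −e₃ for every ω ∈ [ω_*, ω^*], and moreover ‖R(ω)‖ = 1 and ‖R′(ω)‖ = ‖M_f′(ω)‖ for every ω ∈ [ω_*, ω^*] (where ‖·‖ on matrices is the operator norm); in particular ∫_{ω_*}^{ω^*}(‖R(ω)‖² + ‖R′(ω)‖²) dω ≤ ∫_{ω_*}^{ω^*}(‖M_f(ω)‖² + ‖M_f′(ω)‖²) dω. -/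
noncomputable section

open scoped RealInnerProductSpace
open Matrix Set Filter

attribute [local instance] Matrix.normedAddCommGroup Matrix.normedSpace

/-- ℝ³ with the Euclidean norm. -/
abbrev E3 : Type := EuclideanSpace ℝ (Fin 3)

/-- First canonical basis vector of ℝ³. -/
def e1 : E3 := EuclideanSpace.single 0 1
/-- Second canonical basis vector of ℝ³. -/
def e2 : E3 := EuclideanSpace.single 1 1
/-- Third canonical basis vector of ℝ³. -/
def e3 : E3 := EuclideanSpace.single 2 1

/-- Cross (wedge) product on ℝ³. -/
def cross (x y : E3) : E3 :=
  (WithLp.equiv 2 (Fin 3 → ℝ)).symm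
    (crossProduct ((WithLp.equiv 2 (Fin 3 → ℝ)) x) ((WithLp.equiv 2 (Fin 3 → ℝ)) y))

/-- Action of a 3×3 real matrix on ℝ³. -/
def act (A : Matrix (Fin 3) (Fin 3) ℝ) (x : E3) : E3 := Matrix.toEuclideanLin A x

/-- Operator norm of a 3×3 real matrix w.r.t. the Euclidean norm. -/
def opNorm (A : Matrix (Fin 3) (Fin 3) ℝ) : ℝ :=
  ‖(LinearMap.toContinuousLinearMap (Matrix.toEuclideanLin A))‖

/-- `A ∈ SO(3)`. -/
def IsSO (A : Matrix (Fin 3) (Fin 3) ℝ) : Prop := Aᵀ * A = 1 ∧ A.det = 1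

/-! ### Auxiliary lemmas -/

lemma hasDerivWithinAt_of_nmem_closure'' {A : Type*} [NormedAddCommGroup A] [NormedSpace ℝ A]
    {f : ℝ → A} {s : Set ℝ} {x : ℝ} (h : x ∉ closure s) (d : A) : HasDerivWithinAt f d s x := by
  have h2 : HasFDerivWithinAt f (ContinuousLinearMap.smulRight (1 : ℝ →L[ℝ] ℝ) d) s x :=
    HasFDerivWithinAt.of_notMem_closure h
  simpa using h2.hasDerivWithinAt

lemma hasDerivWithinAt_singleton' {A : Type*} [NormedAddCommGroup A] [NormedSpace ℝ A]
    (f : ℝ → A) (x : ℝ) (d : A) : HasDerivWithinAt f d {x} x := by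
  rw [← hasDerivWithinAt_diff_singleton]
  have h1 : ({x} : Set ℝ) \ {x} = ∅ := by simp
  rw [h1]
  have h2 : x ∉ closure (∅ : Set ℝ) := by simp
  exact hasDerivWithinAt_of_nmem_closure'' h2 d

lemma ode_global {A : Type*} [NormedAddCommGroup A] [NormedSpace ℝ A] [CompleteSpace A]
    (v : ℝ → A → A) (L : NNReal) (hL : 0 < (L : ℝ))
    (hlip : ∀ t, LipschitzWith L (v t))
    (hcont : ∀ x, Continuous fun t => v t x)
    (hnorm : ∀ t x, ‖v t x‖ ≤ L * ‖x‖)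
    (a b : ℝ) (hab : a ≤ b) (x₀ : A) :
    ∃ f : ℝ → A, f a = x₀ ∧ ∀ t ∈ Icc a b, HasDerivWithinAt f (v t (f t)) (Icc a b) t := by
  set M : ℝ := ‖x₀‖ * Real.exp (L * (b - a)) with hM
  have hM0 : 0 ≤ M := by positivity
  have hLM : 0 < (L : ℝ) * (M + 1) := by positivity
  set δ : ℝ := 1 / (L * (M + 1)) with hδ
  have hδ0 : 0 < δ := by positivity
  have key : ∀ n : ℕ, ∃ f : ℝ → A, f a = x₀ ∧
      ∀ t ∈ Icc a (min (a + n * δ) b),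
        HasDerivWithinAt f (v t (f t)) (Icc a (min (a + n * δ) b)) t := by
    intro n
    induction n with
    | zero =>
      refine ⟨fun _ => x₀, rfl, ?_⟩
      have h0 : min (a + (0:ℕ) * δ) b = a := by
        simp [min_eq_left, hab]
      rw [h0]
      intro t ht
      rw [Icc_self] at ht ⊢
      rw [mem_singleton_iff] at ht
      subst ht
      exact hasDerivWithinAt_singleton' _ _ _
    | succ n ih =>
      obtain ⟨f, hfa, hf⟩ := ih
      set c : ℝ := min (a + n * δ) b with hc
      set c' : ℝ := min (a + (n + 1 : ℕ) * δ) b with hc'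
      have hnn' : a + (n:ℝ) * δ ≤ a + ((n+1:ℕ):ℝ) * δ := by
        push_cast; nlinarith
      have hcc' : c ≤ c' := min_le_min hnn' le_rfl
      have hac : a ≤ c := le_min (le_add_of_nonneg_right (by positivity)) hab
      by_cases hcb : b ≤ a + n * δ
      · have h1 : c = b := min_eq_right hcb
        have h2 : c' = b := min_eq_right (le_trans hcb hnn')
        exact ⟨f, hfa, by rw [h2, ← h1]; exact hf⟩
      push_neg at hcb
      have hceq : c = a + n * δ := min_eq_left hcb.le
      have hclt : c < b := by rw [hceq]; exact hcb
      have hfc : ContinuousOn f (Icc a c) := fun t ht => (hf t ht).continuousWithinAt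
      have hbd : ∀ t ∈ Icc a c, ‖f t‖ ≤ M := by
        intro t ht
        have hmem : ∀ x ∈ Ico a c, HasDerivWithinAt f (v x (f x)) (Ici x) x := by
          intro x hx
          exact (hf x (Ico_subset_Icc_self hx)).mono_of_mem_nhdsWithin (Icc_mem_nhdsGE_of_mem hx)
        have := norm_le_gronwallBound_of_norm_deriv_right_le (δ := ‖x₀‖) (K := L) (ε := 0)
          hfc hmem (by rw [hfa]) (fun x hx => by simpa using hnorm x (f x)) t ht
        rw [gronwallBound_ε0] at this
        refine this.trans ?_
        rw [hM]
        have h1 : Real.exp (L * (t - a)) ≤ Real.exp (L * (b - a)) := by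
          apply Real.exp_le_exp.2
          have : t - a ≤ b - a := by
            have := ht.2.trans (min_le_right _ _); linarith
          nlinarith [L.coe_nonneg]
        nlinarith [norm_nonneg x₀, Real.exp_pos ((L:ℝ) * (t - a))]
      have hcmem : c ∈ Icc c c' := ⟨le_rfl, hcc'⟩
      have hpl : IsPicardLindelof v (⟨c, hcmem⟩ : Icc c c') (f c) 1 0
          ⟨(L : ℝ) * (M + 1), hLM.le⟩ L := by
        constructor
        · exact fun t _ => (hlip t).lipschitzOnWith
        · exact fun x _ => (hcont x).continuousOn
        · intro t _ x hx
          show ‖v t x‖ ≤ (L : ℝ) * (M + 1)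
          refine (hnorm t x).trans ?_
          have hx1 : ‖x‖ ≤ M + 1 := by
            have h2 := hbd c ⟨hac, le_rfl⟩
            calc ‖x‖ ≤ ‖f c‖ + ‖x - f c‖ := norm_le_norm_add_norm_sub' x (f c)
              _ ≤ M + 1 := by
                  have := mem_closedBall_iff_norm.1 hx
                  simp only [NNReal.coe_one] at this
                  linarith
          nlinarith [L.coe_nonneg]
        · show (L : ℝ) * (M + 1) * max (c' - c) (c - c) ≤ ((1 : NNReal) : ℝ) - ((0 : NNReal) : ℝ)
          have hmax : max (c' - c) (c - c) = c' - c := max_eq_left (by linarith)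
          rw [hmax]
          simp only [NNReal.coe_zero, sub_zero, NNReal.coe_one]
          have h1 : c' - c ≤ δ := by
            have : c' ≤ c + δ := by
              rw [hceq, hc']
              refine (min_le_left _ _).trans ?_
              push_cast; linarith
            linarith
          calc (L : ℝ) * (M + 1) * (c' - c) ≤ (L : ℝ) * (M + 1) * δ := by nlinarith
            _ = 1 := by rw [hδ]; field_simp
      obtain ⟨g, hgc, hg⟩ := hpl.exists_eq_forall_mem_Icc_hasDerivWithinAt₀
      simp only at hgc
      set h : ℝ → A := fun t => if t ≤ c then f t else g t with hh
      have H1 : EqOn h f (Icc a c) := fun s hs => if_pos hs.2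
      have H2 : EqOn h g (Icc c c') := by
        intro s hs
        by_cases hsc : s ≤ c
        · have : s = c := le_antisymm hsc hs.1
          subst this
          simp only [hh, if_pos le_rfl, hgc]
        · exact if_neg hsc
      have hsplit : Icc a c' = Icc a c ∪ Icc c c' := (Icc_union_Icc_eq_Icc hac hcc').symm
      refine ⟨h, by rw [H1 ⟨le_rfl, hac⟩, hfa], ?_⟩
      intro t ht
      rw [hsplit] at ht ⊢
      by_cases htc : t ≤ c
      · have ht1 : t ∈ Icc a c :=
          ⟨(mem_union _ _ _ |>.1 ht).elim (fun h => h.1) (fun h => le_trans hac h.1), htc⟩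
        have d1 : HasDerivWithinAt h (v t (h t)) (Icc a c) t := by
          have := (hf t ht1).congr H1 (H1 ht1)
          rwa [H1 ht1]
        have d2 : HasDerivWithinAt h (v t (h t)) (Icc c c') t := by
          rcases eq_or_lt_of_le htc with heq | hlt
          · subst heq
            have hmem : c ∈ Icc c c' := ⟨le_rfl, hcc'⟩
            have := (hg c hmem).congr H2 (H2 hmem)
            rwa [H2 hmem]
          · refine hasDerivWithinAt_of_nmem_closure'' ?_ _
            rw [closure_Icc]
            exact fun hmem => absurd hmem.1 (not_le.2 hlt)
        exact d1.union d2
      · push_neg at htc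
        have ht2 : t ∈ Icc c c' := by
          rcases (mem_union _ _ _).1 ht with h | h
          · exact absurd h.2 (not_le.2 htc)
          · exact h
        have d2 : HasDerivWithinAt h (v t (h t)) (Icc c c') t := by
          have := (hg t ht2).congr H2 (H2 ht2)
          rwa [H2 ht2]
        have d1 : HasDerivWithinAt h (v t (h t)) (Icc a c) t := by
          refine hasDerivWithinAt_of_nmem_closure'' ?_ _
          rw [closure_Icc]; exact fun hmem => absurd hmem.2 (not_le.2 htc)
        exact d1.union d2
  obtain ⟨n, hn⟩ : ∃ n : ℕ, b ≤ a + n * δ := by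
    refine ⟨⌈(b - a) / δ⌉₊, ?_⟩
    have h1 : (b - a) / δ ≤ (⌈(b - a) / δ⌉₊ : ℝ) := Nat.le_ceil _
    have h2 : b - a ≤ (⌈(b - a) / δ⌉₊ : ℝ) * δ := by
      rw [div_le_iff₀ hδ0] at h1; linarith
    linarith
  obtain ⟨f, hfa, hf⟩ := key n
  rw [min_eq_right hn] at hf
  exact ⟨f, hfa, hf⟩

/-! ### Vector algebra in `E3` -/

lemma inner_eq_sum (x y : E3) : ⟪x, y⟫ = ∑ i, x i * y i := by
  simp [PiLp.inner_apply, RCLike.inner_apply, conj_trivial, mul_comm]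

lemma inner_eq3 (x y : E3) : ⟪x, y⟫ = x 0 * y 0 + x 1 * y 1 + x 2 * y 2 := by
  rw [inner_eq_sum, Fin.sum_univ_three]

lemma cross_apply0 (x y : E3) : cross x y 0 = x 1 * y 2 - x 2 * y 1 := rfl
lemma cross_apply1 (x y : E3) : cross x y 1 = x 2 * y 0 - x 0 * y 2 := rfl
lemma cross_apply2 (x y : E3) : cross x y 2 = x 0 * y 1 - x 1 * y 0 := rfl

lemma E3_ext {x y : E3} (h : ∀ i, x i = y i) : x = y := WithLp.ofLp_injective _ (funext h)

lemma E3_ext3 {x y : E3} (h0 : x 0 = y 0) (h1 : x 1 = y 1) (h2 : x 2 = y 2) : x = y := by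
  apply E3_ext; intro i; fin_cases i <;> assumption

lemma lagrange (u v : E3) : ⟪cross u v, cross u v⟫ = ⟪u,u⟫ * ⟪v,v⟫ - ⟪u,v⟫ ^ 2 := by
  simp only [inner_eq3, cross_apply0, cross_apply1, cross_apply2]
  ring

lemma triple (u v : E3) : cross (cross u v) u = ⟪u,u⟫ • v - ⟪u,v⟫ • u := by
  have h0 : ∀ (c : ℝ) (z : E3) (j : Fin 3), (c • z) j = c * z j := fun _ _ _ => rfl
  have h1 : ∀ (z w : E3) (j : Fin 3), (z - w) j = z j - w j := fun _ _ _ => rfl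
  refine E3_ext3 ?_ ?_ ?_ <;>
    simp only [h1, h0, inner_eq3, cross_apply0, cross_apply1, cross_apply2] <;> ring

lemma cross_skew (w x y : E3) : ⟪cross w x, y⟫ = -⟪x, cross w y⟫ := by
  simp only [inner_eq3, cross_apply0, cross_apply1, cross_apply2]
  ring

lemma norm_sq_eq_inner' (x : E3) : ‖x‖ ^ 2 = ⟪x, x⟫ := by
  rw [← real_inner_self_eq_norm_sq]

lemma norm_cross_le (w x : E3) : ‖cross w x‖ ≤ ‖w‖ * ‖x‖ := by
  have h := lagrange w x
  have h1 : ‖cross w x‖ ^ 2 ≤ (‖w‖ * ‖x‖) ^ 2 := by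
    rw [norm_sq_eq_inner', h]
    have : ⟪w, x⟫ ^ 2 ≥ 0 := sq_nonneg _
    have h2 : ⟪w,w⟫ = ‖w‖^2 := (norm_sq_eq_inner' w).symm
    have h3 : ⟪x,x⟫ = ‖x‖^2 := (norm_sq_eq_inner' x).symm
    rw [h2, h3]; ring_nf; nlinarith
  have hn : (0:ℝ) ≤ ‖cross w x‖ := norm_nonneg _
  have hm : (0:ℝ) ≤ ‖w‖ * ‖x‖ := mul_nonneg (norm_nonneg _) (norm_nonneg _)
  nlinarith [h1, hn, hm]

lemma cross_add_left (u v x : E3) : cross (u + v) x = cross u x + cross v x := by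
  have h0 : ∀ (z w : E3) (j : Fin 3), (z + w) j = z j + w j := fun _ _ _ => rfl
  refine E3_ext3 ?_ ?_ ?_ <;> simp only [h0, cross_apply0, cross_apply1, cross_apply2] <;> ring

lemma cross_smul_left (c : ℝ) (u x : E3) : cross (c • u) x = c • cross u x := by
  have h0 : ∀ (c : ℝ) (z : E3) (j : Fin 3), (c • z) j = c * z j := fun _ _ _ => rfl
  refine E3_ext3 ?_ ?_ ?_ <;> simp only [h0, cross_apply0, cross_apply1, cross_apply2] <;> ring

def crossL (w : E3) : E3 →L[ℝ] E3 :=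
  LinearMap.toContinuousLinearMap
    ((WithLp.linearEquiv 2 ℝ (Fin 3 → ℝ)).symm.toLinearMap ∘ₗ
      (crossProduct ((WithLp.linearEquiv 2 ℝ (Fin 3 → ℝ)) w)) ∘ₗ
      (WithLp.linearEquiv 2 ℝ (Fin 3 → ℝ)).toLinearMap)

lemma crossL_apply (w x : E3) : crossL w x = cross w x := rfl

def crossLw : E3 →ₗ[ℝ] (E3 →L[ℝ] E3) where
  toFun := crossL
  map_add' u v := by ext x; simp [crossL_apply, cross_add_left]
  map_smul' c u := by ext x; simp [crossL_apply, cross_smul_left]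

lemma continuous_crossL : Continuous fun w => crossL w := by
  have : Continuous fun w => crossLw w := crossLw.continuous_of_finiteDimensional
  exact this

/-! ### Matrix/CLM dictionary -/

def T : Matrix (Fin 3) (Fin 3) ℝ ≃ₗ[ℝ] (E3 →L[ℝ] E3) :=
  Matrix.toEuclideanLin.trans LinearMap.toContinuousLinearMap

lemma T_apply (A : Matrix (Fin 3) (Fin 3) ℝ) (x : E3) : T A x = act A x := rfl

lemma opNorm_eq (A : Matrix (Fin 3) (Fin 3) ℝ) : opNorm A = ‖T A‖ := rfl

lemma continuous_Tsymm : Continuous (T.symm : (E3 →L[ℝ] E3) → Matrix (Fin 3) (Fin 3) ℝ) :=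
  T.symm.toLinearMap.continuous_of_finiteDimensional

lemma T_one : T 1 = 1 := by
  apply ContinuousLinearMap.ext
  intro x
  simp [T, Matrix.toEuclideanLin_apply]

lemma T_mul (A B : Matrix (Fin 3) (Fin 3) ℝ) : T (A * B) = T A * T B := by
  apply ContinuousLinearMap.ext
  intro x
  show Matrix.toEuclideanLin (A * B) x = Matrix.toEuclideanLin A (Matrix.toEuclideanLin B x)
  simp [Matrix.toEuclideanLin_apply, Matrix.mulVec_mulVec]

lemma act_coord (A : Matrix (Fin 3) (Fin 3) ℝ) (x : E3) (i : Fin 3) :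
    act A x i = ∑ j, A i j * x j := by
  simp [act, Matrix.toEuclideanLin_apply, Matrix.mulVec,
    dotProduct]

lemma T_transpose (A : Matrix (Fin 3) (Fin 3) ℝ) :
    T Aᵀ = ContinuousLinearMap.adjoint (T A) := by
  refine (ContinuousLinearMap.eq_adjoint_iff _ _).2 fun x y => ?_
  simp only [T_apply]
  simp only [inner_eq_sum, act_coord]
  simp only [Finset.sum_mul, Finset.mul_sum, Matrix.transpose_apply]
  rw [Finset.sum_comm]
  apply Finset.sum_congr rfl
  intro i _
  apply Finset.sum_congr rfl
  intro j _
  ring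

lemma adjoint_crossL (w : E3) :
    ContinuousLinearMap.adjoint (crossL w) = -(crossL w) := by
  symm
  refine (ContinuousLinearMap.eq_adjoint_iff _ _).2 fun x y => ?_
  simp only [ContinuousLinearMap.neg_apply, crossL_apply, inner_neg_left]
  rw [cross_skew]
  simp [real_inner_comm]

lemma exists_R0 (u : E3) (hu : ‖u‖ = 1) :
    ∃ R0 : Matrix (Fin 3) (Fin 3) ℝ, R0ᵀ * R0 = 1 ∧ R0.det = 1 ∧ act R0 u = -e3 := by
  have hcard : Module.finrank ℝ E3 = Fintype.card (Fin 3) := by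
    simp [finrank_euclideanSpace]
  have horth : Orthonormal ℝ (({2} : Set (Fin 3)).restrict (fun _ => u)) := by
    constructor
    · intro i; exact hu
    · intro i j hij
      exfalso
      apply hij
      ext
      rcases i with ⟨i, hi⟩; rcases j with ⟨j, hj⟩
      simp only [mem_singleton_iff] at hi hj
      simp [hi, hj]
  obtain ⟨b, hb⟩ := horth.exists_orthonormalBasis_extension_of_card_eq hcard
  have hb2 : b 2 = u := hb 2 rfl
  have hbij : ∀ i j, ⟪b i, b j⟫ = if i = j then (1:ℝ) else 0 :=
    orthonormal_iff_ite.mp b.orthonormal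
  let rows : ℝ → Fin 3 → E3 := fun ε => ![b 0, ε • b 1, -(b 2)]
  let Rmat : ℝ → Matrix (Fin 3) (Fin 3) ℝ := fun ε => Matrix.of (fun i j => rows ε i j)
  have hsmul : ∀ (c : ℝ) (z : E3) (j : Fin 3), (c • z) j = c * z j := fun _ _ _ => rfl
  have hneg : ∀ (z : E3) (j : Fin 3), (-z) j = -(z j) := fun _ _ => rfl
  have hRR : ∀ ε : ℝ, ε ^ 2 = 1 → Rmat ε * (Rmat ε)ᵀ = 1 := by
    intro ε hε
    ext i j
    rw [Matrix.mul_apply]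
    have hcoe : ∀ k, (Rmat ε) i k * (Rmat ε)ᵀ k j = rows ε i k * rows ε j k := by
      intro k; simp [Rmat, Matrix.transpose_apply]
    rw [Finset.sum_congr rfl (fun k _ => hcoe k), ← inner_eq_sum]
    fin_cases i <;> fin_cases j <;>
      simp [rows, inner_smul_left, inner_smul_right, inner_neg_left, inner_neg_right,
        hbij, Matrix.one_apply] <;>
      first | nlinarith [hε] | (left; rw [norm_smul, b.orthonormal.1 1, mul_one, Real.norm_eq_abs]; nlinarith [sq_abs ε, abs_nonneg ε])
  have hdetrel : ∀ ε : ℝ, (Rmat ε).det = ε * (Rmat 1).det := by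
    intro ε
    rw [Matrix.det_fin_three, Matrix.det_fin_three]
    simp [Rmat, rows, hsmul, hneg]
    ring
  have hdet1 : (Rmat 1).det ^ 2 = 1 := by
    have h1 : (Rmat 1 * (Rmat 1)ᵀ).det = 1 := by rw [hRR 1 (by norm_num)]; simp
    rw [Matrix.det_mul, Matrix.det_transpose] at h1
    nlinarith [h1]
  set ε := (Rmat 1).det with hε
  refine ⟨Rmat ε, ?_, ?_, ?_⟩
  · exact mul_eq_one_comm.mp (hRR ε hdet1)
  · rw [hdetrel ε]; nlinarith [hdet1]
  · have hcoord : ∀ i, act (Rmat ε) u i = ⟪rows ε i, u⟫ := by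
      intro i
      rw [act_coord, inner_eq_sum]
      apply Finset.sum_congr rfl
      intro j _
      simp [Rmat]
    refine E3_ext3 ?_ ?_ ?_ <;>
      rw [hcoord] <;>
      simp [rows, ← hb2, inner_smul_left, inner_neg_left, hbij, e3, EuclideanSpace.single_apply,
        hneg]

/-! ### More CLM utilities -/

lemma clm_comp_hasDerivWithinAt {A B : Type*} [NormedAddCommGroup A] [NormedSpace ℝ A]
    [NormedAddCommGroup B] [NormedSpace ℝ B] (e : A →L[ℝ] B) {f : ℝ → A} {f' : A}
    {s : Set ℝ} {x : ℝ} (h : HasDerivWithinAt f f' s x) :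
    HasDerivWithinAt (fun t => e (f t)) (e f') s x := by
  exact (e.hasFDerivAt.comp_hasDerivWithinAt x h)

def adjL : (E3 →L[ℝ] E3) →ₗ[ℝ] (E3 →L[ℝ] E3) where
  toFun A := ContinuousLinearMap.adjoint A
  map_add' A B := by simp [map_add]
  map_smul' c A := by
    simp only [RingHom.id_apply]
    rw [map_smulₛₗ]
    simp

def adjC : (E3 →L[ℝ] E3) →L[ℝ] (E3 →L[ℝ] E3) := LinearMap.toContinuousLinearMap adjL

lemma adjC_apply (A : E3 →L[ℝ] E3) : adjC A = ContinuousLinearMap.adjoint A := rfl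

lemma norm_e3 : ‖e3‖ = 1 := by
  rw [e3, EuclideanSpace.norm_single]
  norm_num

lemma norm_isometry (U : E3 →L[ℝ] E3) (h : ∀ x, ‖U x‖ = ‖x‖) : ‖U‖ = 1 := by
  refine le_antisymm (ContinuousLinearMap.opNorm_le_bound _ zero_le_one fun x => by
    rw [h x, one_mul]) ?_
  have h1 := U.le_opNorm e3
  rw [h e3, norm_e3, mul_one] at h1
  exact h1

lemma norm_comp_isometry (U A : E3 →L[ℝ] E3) (h : ∀ x, ‖U x‖ = ‖x‖) : ‖U * A‖ = ‖A‖ := by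
  refine le_antisymm (ContinuousLinearMap.opNorm_le_bound _ (norm_nonneg A) fun x => ?_) ?_
  · show ‖U (A x)‖ ≤ ‖A‖ * ‖x‖
    rw [h (A x)]
    exact A.le_opNorm x
  · refine ContinuousLinearMap.opNorm_le_bound _ (norm_nonneg _) fun x => ?_
    have : ‖A x‖ = ‖(U * A) x‖ := by
      show ‖A x‖ = ‖U (A x)‖
      rw [h (A x)]
    rw [this]
    exact (U * A).le_opNorm x

lemma norm_crossL_eq (m m' : E3) (hm : ‖m‖ = 1) (ho : ⟪m, m'⟫ = 0) :
    ‖crossL (cross m m')‖ = ‖m'‖ := by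
  have hmm : ⟪m, m⟫ = 1 := by rw [← norm_sq_eq_inner', hm]; norm_num
  have hw : ‖cross m m'‖ = ‖m'‖ := by
    have h2 : ‖cross m m'‖ ^ 2 = ‖m'‖ ^ 2 := by
      rw [norm_sq_eq_inner', lagrange, ho, hmm, norm_sq_eq_inner']
      ring
    calc ‖cross m m'‖ = Real.sqrt (‖cross m m'‖ ^ 2) := (Real.sqrt_sq (norm_nonneg _)).symm
      _ = Real.sqrt (‖m'‖ ^ 2) := by rw [h2]
      _ = ‖m'‖ := Real.sqrt_sq (norm_nonneg _)
  refine le_antisymm (ContinuousLinearMap.opNorm_le_bound _ (norm_nonneg m') fun x => ?_) ?_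
  · rw [crossL_apply]
    calc ‖cross (cross m m') x‖ ≤ ‖cross m m'‖ * ‖x‖ := norm_cross_le _ _
      _ = ‖m'‖ * ‖x‖ := by rw [hw]
  · have h1 := (crossL (cross m m')).le_opNorm m
    have h2 : crossL (cross m m') m = m' := by
      rw [crossL_apply, triple, hmm, ho]
      simp
    rw [h2, hm, mul_one] at h1
    exact h1


set_option maxHeartbeats 2000000 in
/-- Proposition 1 of the paper: existence of a C¹ rotation-valued profile `R`
sending the target profile `M_f` to the south pole, with pointwise norm identities
and the resulting H¹-type integral bound. -/
theorem stmt0 (a b : ℝ) (hab : a < b)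
    (Mf Mf' : ℝ → E3)
    (hMfderiv : ∀ ω ∈ Icc a b, HasDerivWithinAt Mf (Mf' ω) (Icc a b) ω)
    (hMf'cont : ContinuousOn Mf' (Icc a b))
    (hMfsphere : ∀ ω ∈ Icc a b, ‖Mf ω‖ = 1) :
    ∃ R R' : ℝ → Matrix (Fin 3) (Fin 3) ℝ,
      (∀ ω ∈ Icc a b, HasDerivWithinAt R (R' ω) (Icc a b) ω) ∧
      ContinuousOn R' (Icc a b) ∧
      (∀ ω ∈ Icc a b, IsSO (R ω)) ∧
      (∀ ω ∈ Icc a b, act (R ω) (Mf ω) = -e3) ∧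
      (∀ ω ∈ Icc a b, opNorm (R ω) = 1) ∧
      (∀ ω ∈ Icc a b, opNorm (R' ω) = ‖Mf' ω‖) ∧
      (∫ ω in a..b, (opNorm (R ω) ^ 2 + opNorm (R' ω) ^ 2))
        ≤ ∫ ω in a..b, (‖Mf ω‖ ^ 2 + ‖Mf' ω‖ ^ 2) := by
  have hab' : a ≤ b := hab.le
  have hMfcont : ContinuousOn Mf (Icc a b) := fun t ht => (hMfderiv t ht).continuousWithinAt
  have hinner1 : ∀ ω ∈ Icc a b, ⟪Mf ω, Mf ω⟫ = 1 := by
    intro ω hω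
    rw [← norm_sq_eq_inner', hMfsphere ω hω]; norm_num
  -- orthogonality of Mf and Mf'
  have hortho : ∀ ω ∈ Icc a b, ⟪Mf ω, Mf' ω⟫ = 0 := by
    intro ω hω
    have h1 : HasDerivWithinAt (fun t => ⟪Mf t, Mf t⟫) (⟪Mf ω, Mf' ω⟫ + ⟪Mf' ω, Mf ω⟫)
        (Icc a b) ω := HasDerivWithinAt.inner ℝ (hMfderiv ω hω) (hMfderiv ω hω)
    have h2 : HasDerivWithinAt (fun t => ⟪Mf t, Mf t⟫) 0 (Icc a b) ω := by
      refine (hasDerivWithinAt_const ω (Icc a b) (1:ℝ)).congr ?_ ?_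
      · intro t ht; exact hinner1 t ht
      · exact hinner1 ω hω
    have h3 := (uniqueDiffOn_Icc hab ω hω).eq_deriv _ h1 h2
    have h4 : ⟪Mf' ω, Mf ω⟫ = ⟪Mf ω, Mf' ω⟫ := real_inner_comm _ _
    rw [h4] at h3
    linarith
  -- the angular velocity field
  set cs : ℝ → (E3 →L[ℝ] E3) := fun t => crossL (cross (Mf t) (Mf' t)) with hcs
  have hcscont : ContinuousOn cs (Icc a b) := by
    apply continuous_crossL.comp_continuousOn
    have h1 : ContinuousOn (fun t => crossLw (Mf t)) (Icc a b) :=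
      crossLw.continuous_of_finiteDimensional.comp_continuousOn hMfcont
    have h2 : ContinuousOn (fun t => crossLw (Mf t) (Mf' t)) (Icc a b) :=
      h1.clm_apply hMf'cont
    exact h2
  -- extend cs to ℝ by projection
  set proj : ℝ → ℝ := fun t => (Set.projIcc a b hab' t : ℝ) with hproj
  have hprojcont : Continuous proj := continuous_subtype_val.comp continuous_projIcc
  have hprojmem : ∀ t, proj t ∈ Icc a b := fun t => (Set.projIcc a b hab' t).2
  have hprojid : ∀ t ∈ Icc a b, proj t = t := by
    intro t ht
    simp only [hproj]
    rw [Set.projIcc_of_mem hab' ht]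
  set cse : ℝ → (E3 →L[ℝ] E3) := fun t => cs (proj t) with hcse
  have hcsecont : Continuous cse := hcscont.comp_continuous hprojcont hprojmem
  have hcseeq : ∀ t ∈ Icc a b, cse t = cs t := fun t ht => by
    simp only [hcse]; rw [hprojid t ht]
  -- bound on cse
  obtain ⟨C0, hC0⟩ := isCompact_Icc.exists_bound_of_continuousOn hcscont
  set Lr : ℝ := max C0 0 + 1 with hLr
  have hLrpos : 0 < Lr := by positivity
  have hcsebound : ∀ t, ‖cse t‖ ≤ Lr := by
    intro t
    have := hC0 (proj t) (hprojmem t)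
    have h2 : C0 ≤ max C0 0 := le_max_left _ _
    simp only [hcse]
    linarith
  set LNN : NNReal := Real.toNNReal Lr with hLNN
  have hLcoe : (LNN : ℝ) = Lr := Real.coe_toNNReal _ hLrpos.le
  have hLpos : 0 < (LNN : ℝ) := by rw [hLcoe]; exact hLrpos
  -- initial rotation
  have hMfa : ‖Mf a‖ = 1 := hMfsphere a ⟨le_rfl, hab'⟩
  obtain ⟨R0, hR0orth, hR0det, hR0act⟩ := exists_R0 (Mf a) hMfa
  set U0 : E3 →L[ℝ] E3 := T R0 with hU0
  -- the ODE
  set v : ℝ → (E3 →L[ℝ] E3) → (E3 →L[ℝ] E3) := fun t X => -(X * cse t) with hv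
  have hlip : ∀ t, LipschitzWith LNN (v t) := by
    intro t
    apply LipschitzWith.of_dist_le_mul
    intro X Y
    rw [dist_eq_norm, dist_eq_norm]
    have h1 : v t X - v t Y = (Y - X) * cse t := by
      simp only [hv]
      noncomm_ring
      simp only [smul_mul_assoc, mul_smul_comm]
      abel
    rw [h1]
    calc ‖(Y - X) * cse t‖ ≤ ‖Y - X‖ * ‖cse t‖ := norm_mul_le _ _
      _ ≤ ‖Y - X‖ * Lr := by
          have := hcsebound t
          nlinarith [norm_nonneg (Y - X)]
      _ = (LNN : ℝ) * ‖X - Y‖ := by rw [hLcoe, norm_sub_rev]; ring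
  have hcontv : ∀ X, Continuous fun t => v t X :=
    fun X => (continuous_const.mul hcsecont).neg
  have hnormv : ∀ t X, ‖v t X‖ ≤ (LNN : ℝ) * ‖X‖ := by
    intro t X
    simp only [hv, norm_neg]
    calc ‖X * cse t‖ ≤ ‖X‖ * ‖cse t‖ := norm_mul_le _ _
      _ ≤ (LNN : ℝ) * ‖X‖ := by
          rw [hLcoe]
          have := hcsebound t
          nlinarith [norm_nonneg X]
  obtain ⟨U, hUa, hUderiv⟩ := ode_global v LNN hLpos hlip hcontv hnormv a b hab' U0
  set U' : ℝ → (E3 →L[ℝ] E3) := fun ω => -(U ω * cs ω) with hU'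
  have hUd : ∀ ω ∈ Icc a b, HasDerivWithinAt U (U' ω) (Icc a b) ω := by
    intro ω hω
    have h0 : v ω (U ω) = U' ω := by
      simp only [hv, hU']
      rw [hcseeq ω hω]
    exact h0 ▸ hUderiv ω hω
  have hUcont : ContinuousOn U (Icc a b) := fun t ht => (hUd t ht).continuousWithinAt
  have hU'cont : ContinuousOn U' (Icc a b) := (hUcont.mul hcscont).neg
  -- orthogonality invariant via ODE uniqueness
  set Q : ℝ → (E3 →L[ℝ] E3) := fun ω => adjC (U ω) * U ω with hQdef
  have hadjcs : ∀ ω, ContinuousLinearMap.adjoint (cs ω) = -(cs ω) := by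
    intro ω; simp only [hcs]; exact adjoint_crossL _
  have hadjU' : ∀ ω, ContinuousLinearMap.adjoint (U' ω)
      = cs ω * ContinuousLinearMap.adjoint (U ω) := by
    intro ω
    simp only [hU']
    rw [map_neg]
    have h1 : U ω * cs ω = (U ω).comp (cs ω) := rfl
    rw [h1, ContinuousLinearMap.adjoint_comp, hadjcs]
    simp only [ContinuousLinearMap.neg_comp, neg_neg]
    rfl
  set vQ : ℝ → (E3 →L[ℝ] E3) → (E3 →L[ℝ] E3) := fun t X => cse t * X - X * cse t with hvQ
  have hvQlip : ∀ t, LipschitzWith (2 * LNN) (vQ t) := by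
    intro t
    apply LipschitzWith.of_dist_le_mul
    intro X Y
    rw [dist_eq_norm, dist_eq_norm]
    have h1 : vQ t X - vQ t Y = cse t * (X - Y) - (X - Y) * cse t := by
      simp only [hvQ]
      simp only [mul_sub, sub_mul]
      abel
    rw [h1]
    have h3 := norm_mul_le (cse t) (X - Y)
    have h4 := norm_mul_le (X - Y) (cse t)
    have h5 := hcsebound t
    have h6 : ((2 * LNN : NNReal) : ℝ) = 2 * Lr := by
      push_cast [hLcoe]; ring
    rw [h6]
    calc ‖cse t * (X - Y) - (X - Y) * cse t‖
        ≤ ‖cse t * (X - Y)‖ + ‖(X - Y) * cse t‖ := norm_sub_le _ _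
      _ ≤ ‖cse t‖ * ‖X - Y‖ + ‖X - Y‖ * ‖cse t‖ := add_le_add h3 h4
      _ ≤ Lr * ‖X - Y‖ + ‖X - Y‖ * Lr :=
          add_le_add (mul_le_mul_of_nonneg_right h5 (norm_nonneg _))
            (mul_le_mul_of_nonneg_left h5 (norm_nonneg _))
      _ = 2 * Lr * ‖X - Y‖ := by ring
  have hQd : ∀ ω ∈ Icc a b, HasDerivWithinAt Q (vQ ω (Q ω)) (Icc a b) ω := by
    intro ω hω
    have h1 : HasDerivWithinAt (fun t => adjC (U t)) (adjC (U' ω)) (Icc a b) ω :=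
      clm_comp_hasDerivWithinAt adjC (hUd ω hω)
    have h2 := h1.mul (hUd ω hω)
    have h3 : adjC (U' ω) * U ω + adjC (U ω) * U' ω = vQ ω (Q ω) := by
      have e1 : adjC (U' ω) = cs ω * adjC (U ω) := by
        rw [adjC_apply, adjC_apply]; exact hadjU' ω
      have e2 : U' ω = -(U ω * cs ω) := rfl
      have e3' : vQ ω (Q ω) = cs ω * (adjC (U ω) * U ω) - (adjC (U ω) * U ω) * cs ω := by
        simp only [hvQ, hQdef]
        rw [hcseeq ω hω]
      rw [e1, e2, e3']
      have key : ∀ A B C : E3 →L[ℝ] E3, C * A * B + A * -(B * C) = C * (A * B) - A * B * C := by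
        intro A B C
        have : A * -(B * C) = -(A * (B*C)) := by ext x; simp
        rw [this]; simp only [mul_assoc]; abel
      exact key _ _ _
    rw [h3] at h2
    exact h2
  have hQcont : ContinuousOn Q (Icc a b) := fun t ht => (hQd t ht).continuousWithinAt
  have hQa : Q a = 1 := by
    simp only [hQdef, adjC_apply, hUa, hU0]
    rw [← T_transpose, ← T_mul, hR0orth, T_one]
  have hQ1 : ∀ ω ∈ Icc a b, adjC (U ω) * U ω = 1 := by
    have huniq := ODE_solution_unique (v := vQ) (K := 2 * LNN) (f := Q) (g := fun _ => 1)
      (a := a) (b := b) hvQlip hQcont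
      (fun t ht => (hQd t (Ico_subset_Icc_self ht)).mono_of_mem_nhdsWithin (Icc_mem_nhdsGE_of_mem ht))
      continuousOn_const
      (fun t ht => by
        have hz : vQ t ((fun _ => (1 : E3 →L[ℝ] E3)) t) = 0 := by
          simp only [hvQ]; simp
        rw [hz]
        exact hasDerivWithinAt_const _ _ _)
      (by rw [hQa])
    intro ω hω
    exact huniq hω
  -- U preserves inner products and norms
  have hUinner : ∀ ω ∈ Icc a b, ∀ x y : E3, ⟪U ω x, U ω y⟫ = ⟪x, y⟫ := by
    intro ω hω x y
    have h1 : ⟪ContinuousLinearMap.adjoint (U ω) (U ω x), y⟫ = ⟪U ω x, U ω y⟫ :=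
      ContinuousLinearMap.adjoint_inner_left _ _ _
    have h2 : ContinuousLinearMap.adjoint (U ω) (U ω x) = x := by
      have h3 := hQ1 ω hω
      have h4 : (adjC (U ω) * U ω) x = (1 : E3 →L[ℝ] E3) x := by rw [h3]
      simpa [adjC_apply] using h4
    rw [h2] at h1
    exact h1.symm
  have hUnorm : ∀ ω ∈ Icc a b, ∀ x : E3, ‖U ω x‖ = ‖x‖ := by
    intro ω hω x
    have h1 : ‖U ω x‖ ^ 2 = ‖x‖ ^ 2 := by
      rw [norm_sq_eq_inner', norm_sq_eq_inner', hUinner ω hω x x]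
    calc ‖U ω x‖ = Real.sqrt (‖U ω x‖ ^ 2) := (Real.sqrt_sq (norm_nonneg _)).symm
      _ = Real.sqrt (‖x‖ ^ 2) := by rw [h1]
      _ = ‖x‖ := Real.sqrt_sq (norm_nonneg _)
  -- U sends Mf to the south pole
  have hcsMf : ∀ ω ∈ Icc a b, cs ω (Mf ω) = Mf' ω := by
    intro ω hω
    show crossL (cross (Mf ω) (Mf' ω)) (Mf ω) = Mf' ω
    rw [crossL_apply, triple, hinner1 ω hω, hortho ω hω]
    simp
  have hmd : ∀ ω ∈ Icc a b, HasDerivWithinAt (fun t => U t (Mf t)) 0 (Icc a b) ω := by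
    intro ω hω
    have h1 := (hUd ω hω).clm_apply (hMfderiv ω hω)
    have h2 : U' ω (Mf ω) + U ω (Mf' ω) = 0 := by
      have e2 : U' ω (Mf ω) = -(U ω (cs ω (Mf ω))) := rfl
      rw [e2, hcsMf ω hω]
      simp
    rw [h2] at h1
    exact h1
  have hmconst := constant_of_has_deriv_right_zero
      (fun t ht => (hmd t ht).continuousWithinAt)
      (fun t ht => (hmd t (Ico_subset_Icc_self ht)).mono_of_mem_nhdsWithin (Icc_mem_nhdsGE_of_mem ht))
  have hma : U a (Mf a) = -e3 := by
    rw [hUa]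
    exact hR0act
  have hm : ∀ ω ∈ Icc a b, U ω (Mf ω) = -e3 := by
    intro ω hω
    have := hmconst ω hω
    try simp only at this
    rw [this, hma]
  -- the rotation profile
  set Tsc : (E3 →L[ℝ] E3) →L[ℝ] Matrix (Fin 3) (Fin 3) ℝ :=
    LinearMap.toContinuousLinearMap T.symm.toLinearMap with hTsc
  set R : ℝ → Matrix (Fin 3) (Fin 3) ℝ := fun ω => T.symm (U ω) with hR
  set R' : ℝ → Matrix (Fin 3) (Fin 3) ℝ := fun ω => T.symm (U' ω) with hR'
  have hRd : ∀ ω ∈ Icc a b, HasDerivWithinAt R (R' ω) (Icc a b) ω := by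
    intro ω hω
    exact clm_comp_hasDerivWithinAt Tsc (hUd ω hω)
  have hR'cont : ContinuousOn R' (Icc a b) := continuous_Tsymm.comp_continuousOn hU'cont
  have hTR : ∀ ω, T (R ω) = U ω := fun ω => T.apply_symm_apply (U ω)
  have hRTR : ∀ ω ∈ Icc a b, (R ω)ᵀ * R ω = 1 := by
    intro ω hω
    apply T.injective
    rw [T_mul, T_transpose, T_one, hTR]
    have := hQ1 ω hω
    rw [adjC_apply] at this
    exact this
  have hRa : R a = R0 := by
    simp only [hR]
    rw [hUa]
    exact T.symm_apply_apply R0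
  have hdet2 : ∀ ω ∈ Icc a b, (R ω).det ^ 2 = 1 := by
    intro ω hω
    have h1 : ((R ω)ᵀ * R ω).det = 1 := by rw [hRTR ω hω]; simp
    rw [Matrix.det_mul, Matrix.det_transpose] at h1
    nlinarith [h1]
  have hRcont : ContinuousOn R (Icc a b) := continuous_Tsymm.comp_continuousOn hUcont
  have hdcont : ContinuousOn (fun ω => (R ω).det) (Icc a b) :=
    (continuous_id.matrix_det).comp_continuousOn hRcont
  have hdet : ∀ ω ∈ Icc a b, (R ω).det = 1 := by
    intro ω hω
    by_contra hne
    have hsq := hdet2 ω hω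
    have hval : (R ω).det = -1 := by
      have hfac : ((R ω).det - 1) * ((R ω).det + 1) = 0 := by nlinarith
      rcases mul_eq_zero.1 hfac with h | h
      · exact absurd (by linarith) hne
      · linarith
    have hmono : Icc a ω ⊆ Icc a b := Icc_subset_Icc le_rfl hω.2
    have hIVT := intermediate_value_Icc' hω.1 (hdcont.mono hmono)
    have h0mem : (0:ℝ) ∈ Icc ((R ω).det) ((R a).det) := by
      rw [hval, hRa, hR0det]
      constructor <;> norm_num
    obtain ⟨s, hs, hs0⟩ := hIVT h0mem
    have hcontra := hdet2 s (hmono hs)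
    simp only at hs0
    rw [hs0] at hcontra
    norm_num at hcontra
  have hact : ∀ ω ∈ Icc a b, act (R ω) (Mf ω) = -e3 := by
    intro ω hω
    rw [← T_apply, hTR]
    exact hm ω hω
  have hnR : ∀ ω ∈ Icc a b, opNorm (R ω) = 1 := by
    intro ω hω
    rw [opNorm_eq, hTR]
    exact norm_isometry _ (hUnorm ω hω)
  have hnR' : ∀ ω ∈ Icc a b, opNorm (R' ω) = ‖Mf' ω‖ := by
    intro ω hω
    rw [opNorm_eq]
    have h1 : T (R' ω) = U' ω := T.apply_symm_apply (U' ω)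
    rw [h1]
    have h2 : ‖U' ω‖ = ‖U ω * cs ω‖ := by
      simp only [hU']
      rw [norm_neg]
    rw [h2, norm_comp_isometry _ _ (hUnorm ω hω)]
    exact norm_crossL_eq (Mf ω) (Mf' ω) (hMfsphere ω hω) (hortho ω hω)
  refine ⟨R, R', hRd, hR'cont, fun ω hω => ⟨hRTR ω hω, hdet ω hω⟩, hact, hnR, hnR', ?_⟩
  refine le_of_eq (intervalIntegral.integral_congr ?_)
  rw [uIcc_of_le hab']
  intro ω hω
  simp only
  rw [hnR ω hω, hnR' ω hω, hMfsphere ω hω]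
end
end

section
/- Let ε ∈ {1, −1}, ω ∈ ℝ, let u₁, u₂ : I → ℝ be functions on an interval I, and let σ : I → ℝ be differentiable with σ′(t) = ε for all t ∈ I. If M₁ : I → ℝ³ is differentiable and satisfies M₁′(t) = (u₁(t) e₁ + u₂(t) e₂ + ε ω e₃) ∧ M₁(t) for all t ∈ I, then M₂(t) := exp(σ(t) ω S) M₁(t) satisfies M₂′(t) = Σ_{i=1}^{2} u_i(t) [exp(σ(t) ω S) e_i] ∧ M₂(t) for all t ∈ I, where exp is the matrix exponential. -/
noncomputable section

open scoped RealInnerProductSpace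
open Matrix Set Filter

attribute [local instance] Matrix.normedAddCommGroup Matrix.normedSpace

/-- The matrix S with rows (0,1,0), (−1,0,0), (0,0,0). -/
def Smat : Matrix (Fin 3) (Fin 3) ℝ := !![0,1,0; -1,0,0; 0,0,0]

/-- Matrix exponential. -/
def expm (A : Matrix (Fin 3) (Fin 3) ℝ) : Matrix (Fin 3) (Fin 3) ℝ := NormedSpace.exp A


section Aux

/-- Auxiliary matrix: diag(1,1,0). -/
def E2m : Matrix (Fin 3) (Fin 3) ℝ := !![1,0,0; 0,1,0; 0,0,0]
/-- Auxiliary matrix: diag(0,0,1). -/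
def Pm3 : Matrix (Fin 3) (Fin 3) ℝ := !![0,0,0; 0,0,0; 0,0,1]

lemma Ssq : Smat * Smat = -E2m := by
  ext i j; fin_cases i <;> fin_cases j <;>
    simp [Smat, E2m, Matrix.mul_apply, Fin.sum_univ_three, Matrix.vecHead, Matrix.vecTail]

lemma SE2 : Smat * E2m = Smat := by
  ext i j; fin_cases i <;> fin_cases j <;>
    simp [Smat, E2m, Matrix.mul_apply, Fin.sum_univ_three, Matrix.vecHead, Matrix.vecTail]

lemma E2sq : E2m * E2m = E2m := by
  ext i j; fin_cases i <;> fin_cases j <;>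
    simp [Smat, E2m, Matrix.mul_apply, Fin.sum_univ_three, Matrix.vecHead, Matrix.vecTail]

lemma one_eq : (1 : Matrix (Fin 3) (Fin 3) ℝ) = E2m + Pm3 := by
  ext i j; fin_cases i <;> fin_cases j <;>
    simp [E2m, Pm3, Matrix.one_apply, Matrix.vecHead, Matrix.vecTail]

lemma Spow_odd (k : ℕ) : Smat ^ (2*k+1) = ((-1:ℝ)^k) • Smat := by
  induction k with
  | zero => simp
  | succ k ih =>
      have h : 2*(k+1)+1 = (2*k+1) + 2 := by ring
      rw [h, pow_add, ih, pow_two, smul_mul_assoc, Ssq, mul_neg, SE2, pow_succ,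
        mul_smul]
      simp

lemma Spow_even (k : ℕ) : Smat ^ (2*(k+1)) = ((-1:ℝ)^(k+1)) • E2m := by
  induction k with
  | zero => simpa [pow_two] using Ssq
  | succ k ih =>
      have h : 2*(k+2) = 2*(k+1) + 2 := by ring
      rw [h, pow_add, ih, pow_two, smul_mul_assoc, Ssq, mul_neg, E2sq, pow_succ,
        mul_smul]
      simp [pow_succ]

open scoped Nat in
set_option maxHeartbeats 1000000 in
lemma hasSum_exp (a : ℝ) :
    HasSum (fun n : ℕ => ((n !⁻¹ : ℝ)) • (a • Smat) ^ n)
      ((Real.cos a • E2m + Pm3) + Real.sin a • Smat) := by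
  have he : HasSum (fun k : ℕ => (((2*k)!⁻¹ : ℝ)) • (a • Smat) ^ (2*k))
      (Real.cos a • E2m + Pm3) := by
    have h1 := (Real.hasSum_cos a).smul_const E2m
    have h2 : HasSum (fun k : ℕ => if k = 0 then Pm3 else 0) Pm3 := hasSum_ite_eq 0 Pm3
    have h3 := h1.add h2
    convert h3 using 1
    funext k
    cases k with
    | zero => simp [one_eq]
    | succ k =>
        rw [smul_pow, Spow_even, smul_smul, smul_smul]
        simp only [Nat.succ_ne_zero, if_false, add_zero]
        congr 1
        ring
  have ho : HasSum (fun k : ℕ => (((2*k+1)!⁻¹ : ℝ)) • (a • Smat) ^ (2*k+1))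
      (Real.sin a • Smat) := by
    have h1 := (Real.hasSum_sin a).smul_const Smat
    convert h1 using 1
    funext k
    rw [smul_pow, Spow_odd, smul_smul, smul_smul]
    congr 1
    ring
  exact he.even_add_odd ho

lemma expm_eq (a : ℝ) :
    expm (a • Smat) = (Real.cos a • E2m + Pm3) + Real.sin a • Smat := by
  rw [expm, NormedSpace.exp_eq_tsum (𝕂 := ℝ)]
  exact (hasSum_exp a).tsum_eq

/-- The bilinear action of matrices on `E3`, as a continuous linear map. -/
def Phi : Matrix (Fin 3) (Fin 3) ℝ →L[ℝ] (E3 →L[ℝ] E3) :=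
  LinearMap.toContinuousLinearMap <|
    ((LinearMap.toContinuousLinearMap :
        (E3 →ₗ[ℝ] E3) ≃ₗ[ℝ] (E3 →L[ℝ] E3)).toLinearMap) ∘ₗ
      ((Matrix.toEuclideanLin :
        Matrix (Fin 3) (Fin 3) ℝ ≃ₗ[ℝ] (E3 →ₗ[ℝ] E3)).toLinearMap)

lemma Phi_apply (A : Matrix (Fin 3) (Fin 3) ℝ) (x : E3) : Phi A x = act A x := rfl

end Aux

/-- The transformation `M₂ = exp(σ(t) ω S) M₁` puts the system
`M₁′ = (u₁e₁ + u₂e₂ + εω e₃) ∧ M₁` (with `σ′ = ε`) in driftless form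
`M₂′ = Σᵢ uᵢ [exp(σ(t) ω S) eᵢ] ∧ M₂`. -/
theorem stmt6 (eps : ℝ) (heps : eps = 1 ∨ eps = -1) (ω : ℝ)
    (I : Set ℝ) (hI : I.OrdConnected)
    (u1 u2 : ℝ → ℝ) (σ : ℝ → ℝ)
    (hσ : ∀ t ∈ I, HasDerivWithinAt σ eps I t)
    (M1 : ℝ → E3)
    (hM1 : ∀ t ∈ I, HasDerivWithinAt M1
      (cross (u1 t • e1 + u2 t • e2 + (eps * ω) • e3) (M1 t)) I t) :
    ∀ t ∈ I, HasDerivWithinAt (fun s => act (expm ((σ s * ω) • Smat)) (M1 s))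
      (u1 t • cross (act (expm ((σ t * ω) • Smat)) e1)
          (act (expm ((σ t * ω) • Smat)) (M1 t))
        + u2 t • cross (act (expm ((σ t * ω) • Smat)) e2)
          (act (expm ((σ t * ω) • Smat)) (M1 t))) I t := by
  intro t ht
  have hb : HasDerivWithinAt (fun s => σ s * ω) (eps * ω) I t := (hσ t ht).mul_const ω
  set a := σ t * ω with ha
  have hcos : HasDerivWithinAt (fun s => Real.cos (σ s * ω)) (-Real.sin a * (eps * ω)) I t :=
    by have := (Real.hasDerivAt_cos a).comp_hasDerivWithinAt t hb; exact this
  have hsin : HasDerivWithinAt (fun s => Real.sin (σ s * ω)) (Real.cos a * (eps * ω)) I t :=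
    by have := (Real.hasDerivAt_sin a).comp_hasDerivWithinAt t hb; exact this
  have hF : HasDerivWithinAt
      (fun s => (Real.cos (σ s * ω) • E2m + Pm3) + Real.sin (σ s * ω) • Smat)
      ((-Real.sin a * (eps * ω)) • E2m + (Real.cos a * (eps * ω)) • Smat) I t :=
    ((hcos.smul_const E2m).add_const Pm3).add (hsin.smul_const Smat)
  have hc : HasDerivWithinAt
      (fun s => Phi ((Real.cos (σ s * ω) • E2m + Pm3) + Real.sin (σ s * ω) • Smat))
      (Phi ((-Real.sin a * (eps * ω)) • E2m + (Real.cos a * (eps * ω)) • Smat)) I t :=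
    Phi.hasFDerivAt.comp_hasDerivWithinAt t hF
  have h := hc.clm_apply (hM1 t ht)
  simp only [expm_eq]
  have hval : Phi ((-Real.sin a * (eps * ω)) • E2m + (Real.cos a * (eps * ω)) • Smat) (M1 t)
      + Phi ((Real.cos a • E2m + Pm3) + Real.sin a • Smat)
        (cross (u1 t • e1 + u2 t • e2 + (eps * ω) • e3) (M1 t))
      = u1 t • cross (act ((Real.cos a • E2m + Pm3) + Real.sin a • Smat) e1)
          (act ((Real.cos a • E2m + Pm3) + Real.sin a • Smat) (M1 t))
        + u2 t • cross (act ((Real.cos a • E2m + Pm3) + Real.sin a • Smat) e2)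
          (act ((Real.cos a • E2m + Pm3) + Real.sin a • Smat) (M1 t)) := by
    apply (WithLp.equiv 2 (Fin 3 → ℝ)).injective
    simp only [Phi_apply, act, Matrix.toEuclideanLin_apply, cross, Equiv.apply_symm_apply,
      WithLp.equiv_apply, WithLp.ofLp_add, WithLp.ofLp_smul, e1, e2, e3, EuclideanSpace.single]
    funext i
    fin_cases i <;>
      simp [Matrix.mulVec, dotProduct, Fin.sum_univ_three, cross_apply, E2m, Pm3, Smat,
        Matrix.add_apply, Matrix.smul_apply, Pi.single_apply, Matrix.vecHead, Matrix.vecTail] <;>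
      ring_nf
    linear_combination (u2 t * M1 t 0 - u1 t * M1 t 1) * Real.sin_sq_add_cos_sq (σ t * ω)
  rw [← hval]
  exact h
end
end

section
/- Let R : [ω_*, ω^*] → SO(3) be continuously differentiable, let F(t,ω) := R(ω) exp(σ(t) ω S), and let u₁, u₂ : [0, ∞) → ℝ be continuous. Suppose N : [0, ∞) × [ω_*, ω^*] → ℝ³ is continuously differentiable, has continuous mixed second partial derivative ∂²N/∂t∂ω, and satisfies ∂N/∂t(t,ω) = Σ_{i=1}^{2} u_i(t) [F(t,ω) e_i] ∧ N(t,ω) for all t ≥ 0 and ω ∈ [ω_*, ω^*]. Then the function t ↦ L(N(t,·)) is differentiable on every interval where σ is differentiable, with d/dt L(N(t,·)) = Σ_{i=1}^{2} u_i(t) H_i[t, N(t,·)]. -/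
noncomputable section

open scoped RealInnerProductSpace
open Matrix Set Filter

attribute [local instance] Matrix.normedAddCommGroup Matrix.normedSpace

/-- The switching function σ(t) = ∫₀ᵗ (−1)^⌊s/T⌋ ds. -/
def sigma (T t : ℝ) : ℝ := ∫ s in (0:ℝ)..t, ((-1 : ℝ) ^ (⌊s / T⌋))

/-- F(t,ω) = R(ω) exp(σ(t) ω S). -/
def Fmat (R : ℝ → Matrix (Fin 3) (Fin 3) ℝ) (T t ω : ℝ) : Matrix (Fin 3) (Fin 3) ℝ :=
  R ω * expm ((sigma T t * ω) • Smat)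

/-- ∂F/∂ω(t,ω) = R′(ω) exp(σ(t) ω S) + σ(t) R(ω) S exp(σ(t) ω S). -/
def Fmatω (R R' : ℝ → Matrix (Fin 3) (Fin 3) ℝ) (T t ω : ℝ) : Matrix (Fin 3) (Fin 3) ℝ :=
  R' ω * expm ((sigma T t * ω) • Smat) + sigma T t • (R ω * (Smat * expm ((sigma T t * ω) • Smat)))

/-- The functional H[t,N] (for basis direction `v`), where `N'` denotes dN/dω:
`H_v[t,N] = ∫ (⟨N′, (∂F/∂ω v) ∧ N⟩ + ⟨e₃, (F v) ∧ N⟩) dω`. -/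
def Hfun (a b : ℝ) (R R' : ℝ → Matrix (Fin 3) (Fin 3) ℝ) (T t : ℝ)
    (N N' : ℝ → E3) (v : E3) : ℝ :=
  ∫ ω in a..b, (⟪N' ω, cross (act (Fmatω R R' T t ω) v) (N ω)⟫
    + ⟪e3, cross (act (Fmat R T t ω) v) (N ω)⟫)

/-- The Lyapunov functional L(N) = ∫ (½‖N′‖² + 1 + ⟨N, e₃⟩) dω. -/
def Lfun (a b : ℝ) (N N' : ℝ → E3) : ℝ :=
  ∫ ω in a..b, ((1/2) * ‖N' ω‖^2 + 1 + ⟪N ω, e3⟫)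


/-! ### Auxiliary machinery -/

abbrev M3 : Type := Matrix (Fin 3) (Fin 3) ℝ

/-- a bilinear map between finite-dimensional spaces, as a continuous bilinear map -/
def bilCLM {M N P : Type*} [NormedAddCommGroup M] [NormedSpace ℝ M] [FiniteDimensional ℝ M]
    [NormedAddCommGroup N] [NormedSpace ℝ N] [FiniteDimensional ℝ N]
    [NormedAddCommGroup P] [NormedSpace ℝ P]
    (B : M →ₗ[ℝ] N →ₗ[ℝ] P) : M →L[ℝ] N →L[ℝ] P :=
  LinearMap.toContinuousLinearMap
    (((LinearMap.toContinuousLinearMap :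
        (N →ₗ[ℝ] P) ≃ₗ[ℝ] (N →L[ℝ] P)).toLinearMap).comp B)

@[simp] lemma bilCLM_apply {M N P : Type*} [NormedAddCommGroup M] [NormedSpace ℝ M]
    [FiniteDimensional ℝ M] [NormedAddCommGroup N] [NormedSpace ℝ N] [FiniteDimensional ℝ N]
    [NormedAddCommGroup P] [NormedSpace ℝ P]
    (B : M →ₗ[ℝ] N →ₗ[ℝ] P) (x : M) (y : N) : bilCLM B x y = B x y := rfl

lemma HasDerivWithinAt.bil {M N P : Type*} [NormedAddCommGroup M] [NormedSpace ℝ M]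
    [FiniteDimensional ℝ M] [NormedAddCommGroup N] [NormedSpace ℝ N] [FiniteDimensional ℝ N]
    [NormedAddCommGroup P] [NormedSpace ℝ P]
    (B : M →ₗ[ℝ] N →ₗ[ℝ] P) {f : ℝ → M} {g : ℝ → N} {f' : M} {g' : N} {s : Set ℝ} {x : ℝ}
    (hf : HasDerivWithinAt f f' s x) (hg : HasDerivWithinAt g g' s x) :
    HasDerivWithinAt (fun y => B (f y) (g y)) (B f' (g x) + B (f x) g') s x := by
  have h1 : HasDerivWithinAt (fun y => bilCLM B (f y)) (bilCLM B f') s x :=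
    (bilCLM B).hasFDerivAt.comp_hasDerivWithinAt x hf
  simpa using h1.clm_apply hg

lemma continuous_bil {M N P : Type*} [NormedAddCommGroup M] [NormedSpace ℝ M]
    [FiniteDimensional ℝ M] [NormedAddCommGroup N] [NormedSpace ℝ N] [FiniteDimensional ℝ N]
    [NormedAddCommGroup P] [NormedSpace ℝ P] (B : M →ₗ[ℝ] N →ₗ[ℝ] P) :
    Continuous (fun p : M × N => B p.1 p.2) := by
  have := (bilCLM B).isBoundedBilinearMap.continuous
  simpa using this

/-- cross product as a bilinear map -/
def crossB : E3 →ₗ[ℝ] E3 →ₗ[ℝ] E3 :=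
  LinearMap.mk₂ ℝ cross
    (fun x y z => by simp [cross, map_add, LinearMap.add_apply])
    (fun c x y => by simp [cross, _root_.map_smul, LinearMap.smul_apply])
    (fun x y z => by simp [cross, map_add])
    (fun c x y => by simp [cross, _root_.map_smul])

@[simp] lemma crossB_apply (x y : E3) : crossB x y = cross x y := rfl

/-- matrix action as a bilinear map -/
def actB : M3 →ₗ[ℝ] E3 →ₗ[ℝ] E3 := Matrix.toEuclideanLin.toLinearMap

@[simp] lemma actB_apply (A : M3) (x : E3) : actB A x = act A x := rfl

/-- matrix multiplication as a bilinear map -/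
def mulB : M3 →ₗ[ℝ] M3 →ₗ[ℝ] M3 := LinearMap.mul ℝ M3

@[simp] lemma mulB_apply (A B : M3) : mulB A B = A * B := rfl

lemma inner_cross_self (z x : E3) : ⟪x, cross z x⟫ = 0 := by
  simp only [cross, crossProduct]
  rw [PiLp.inner_apply]
  simp [Fin.sum_univ_three, WithLp.equiv_symm_apply]
  ring

/-- the right-hand side of the PDE -/
def RHSfun (u1 u2 : ℝ → ℝ) (R : ℝ → M3) (T : ℝ) (N : ℝ → ℝ → E3) (t ω : ℝ) : E3 :=
  u1 t • cross (act (Fmat R T t ω) e1) (N t ω) + u2 t • cross (act (Fmat R T t ω) e2) (N t ω)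

/-- the ω-derivative of the right-hand side of the PDE -/
def RHSWfun (u1 u2 : ℝ → ℝ) (R R' : ℝ → M3) (T : ℝ) (N Nw : ℝ → ℝ → E3) (t ω : ℝ) : E3 :=
  u1 t • (cross (act (Fmatω R R' T t ω) e1) (N t ω) + cross (act (Fmat R T t ω) e1) (Nw t ω))
  + u2 t • (cross (act (Fmatω R R' T t ω) e2) (N t ω) + cross (act (Fmat R T t ω) e2) (Nw t ω))

end

/-! ### Integral helper lemmas -/

noncomputable section Helpers
open Set Filter MeasureTheory intervalIntegral Topology

variable {E : Type*} [NormedAddCommGroup E] [NormedSpace ℝ E]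

/-- FTC-2 with within-derivatives on a closed interval. -/
lemma ftc2_within [CompleteSpace E] {c d : ℝ} (hcd : c ≤ d) {f f' : ℝ → E}
    (hd : ∀ x ∈ Icc c d, HasDerivWithinAt f (f' x) (Icc c d) x)
    (hc' : ContinuousOn f' (Icc c d)) :
    ∫ x in c..d, f' x = f d - f c := by
  refine intervalIntegral.integral_eq_sub_of_hasDeriv_right_of_le hcd
    (fun x hx => (hd x hx).continuousWithinAt) (fun x hx => ?_)
    (hc'.intervalIntegrable_of_Icc hcd)
  exact (hd x (Ioo_subset_Icc_self hx)).mono_of_mem_nhdsWithin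
    (mem_of_superset (Ioc_mem_nhdsGT_of_mem ⟨le_refl x, hx.2⟩)
      (Ioc_subset_Icc_self.trans (Icc_subset_Icc hx.1.le le_rfl)))

/-- If all primitives of a continuous function vanish, the function vanishes. -/
lemma eq_zero_of_integral_zero [CompleteSpace E] {c d : ℝ} (hcd : c < d) {h : ℝ → E}
    (hc : ContinuousOn h (Icc c d))
    (hint : ∀ t ∈ Icc c d, ∫ x in c..t, h x = 0) :
    ∀ t ∈ Icc c d, h t = 0 := by
  have hIoo : ∀ t ∈ Ioo c d, h t = 0 := by
    intro t ht
    have hmeas : StronglyMeasurableAtFilter h (𝓝 t) :=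
      ⟨Ioo c d, Ioo_mem_nhds ht.1 ht.2,
        (hc.mono Ioo_subset_Icc_self).aestronglyMeasurable measurableSet_Ioo⟩
    have hca : ContinuousAt h t := hc.continuousAt (Icc_mem_nhds ht.1 ht.2)
    have hii : IntervalIntegrable h volume c t :=
      ((hc.mono (Icc_subset_Icc le_rfl ht.2.le)).intervalIntegrable_of_Icc ht.1.le)
    have hF : HasDerivAt (fun u => ∫ x in c..u, h x) (h t) t :=
      intervalIntegral.integral_hasDerivAt_right hii hmeas hca
    have hF0 : (fun u => ∫ x in c..u, h x) =ᶠ[nhds t] fun _ => (0 : E) := by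
      filter_upwards [Ioo_mem_nhds ht.1 ht.2] with u hu
      exact hint u ⟨hu.1.le, hu.2.le⟩
    have hG : HasDerivAt (fun _ : ℝ => (0 : E)) (h t) t := hF.congr_of_eventuallyEq hF0.symm
    exact (hG.unique (hasDerivAt_const t 0))
  intro t ht
  have l1 : Tendsto h (𝓝[Ioo c d] t) (𝓝 (h t)) := (hc t ht).mono Ioo_subset_Icc_self
  haveI hnb : (𝓝[Ioo c d] t).NeBot := by
    refine mem_closure_iff_nhdsWithin_neBot.1 ?_
    rw [closure_Ioo hcd.ne]; exact ht
  have l2 : Tendsto h (𝓝[Ioo c d] t) (𝓝 (0 : E)) := by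
    refine Tendsto.congr' ?_ tendsto_const_nhds
    filter_upwards [self_mem_nhdsWithin] with u hu
    exact (hIoo u hu).symm
  exact tendsto_nhds_unique l1 l2

/-- Continuity of a parametric interval integral. -/
lemma contOn_param {c d : ℝ} (hcd : c ≤ d) {P : Set ℝ} (hP : IsClosed P)
    {f : ℝ → ℝ → E} (hf : ContinuousOn (fun p : ℝ × ℝ => f p.1 p.2) (P ×ˢ Icc c d)) :
    ContinuousOn (fun p => ∫ x in c..d, f p x) P := by
  intro x₀ hx₀
  set K : Set ℝ := P ∩ Icc (x₀ - 1) (x₀ + 1) with hKdef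
  have hKcp : IsCompact K := isCompact_Icc.inter_left hP
  obtain ⟨C, hC⟩ : ∃ C, ∀ q ∈ K ×ˢ Icc c d, ‖(fun p : ℝ × ℝ => f p.1 p.2) q‖ ≤ C :=
    (hKcp.prod isCompact_Icc).exists_bound_of_continuousOn
      (hf.mono (prod_mono inter_subset_left subset_rfl))
  have hsub : Set.uIoc c d ⊆ Icc c d := by
    rw [uIoc_of_le hcd]; exact Ioc_subset_Icc_self
  refine intervalIntegral.continuousWithinAt_of_dominated_interval
    (bound := fun _ => C) ?_ ?_ intervalIntegrable_const ?_
  · filter_upwards [self_mem_nhdsWithin] with x hx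
    have : ContinuousOn (f x) (Icc c d) := by
      refine (hf.comp (Continuous.continuousOn (continuous_const.prodMk continuous_id))
        fun y hy => ?_)
      exact mk_mem_prod hx hy
    exact (this.mono hsub).aestronglyMeasurable measurableSet_uIoc
  · have hIcc : Icc (x₀ - 1) (x₀ + 1) ∈ nhds x₀ := Icc_mem_nhds (by linarith) (by linarith)
    filter_upwards [inter_mem self_mem_nhdsWithin (nhdsWithin_le_nhds hIcc)] with x hx
    exact Eventually.of_forall fun t ht => hC (x, t) (mk_mem_prod hx (hsub ht))
  · refine Eventually.of_forall fun t ht => ?_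
    have := hf (x₀, t) (mk_mem_prod hx₀ (hsub ht))
    have hslice : ContinuousWithinAt (fun x : ℝ => (x, t)) P x₀ :=
      (continuous_id.prodMk continuous_const).continuousWithinAt
    exact ContinuousWithinAt.comp (g := fun p : ℝ × ℝ => f p.1 p.2)
      (f := fun x : ℝ => (x, t)) (x := x₀) this hslice
      (fun y hy => mk_mem_prod hy (hsub ht))

/-- Fubini for continuous functions on a rectangle, interval-integral version. -/
lemma interval_integral_swap {c d q r : ℝ} (hcd : c ≤ d) (hqr : q ≤ r) {f : ℝ → ℝ → E}
    (hf : ContinuousOn (fun p : ℝ × ℝ => f p.1 p.2) (Icc c d ×ˢ Icc q r)) :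
    ∫ s in c..d, ∫ x in q..r, f s x = ∫ x in q..r, ∫ s in c..d, f s x := by
  rw [intervalIntegral.integral_of_le hcd, intervalIntegral.integral_of_le hqr]
  simp_rw [intervalIntegral.integral_of_le hcd, intervalIntegral.integral_of_le hqr]
  have hint : Integrable (Function.uncurry f)
      ((volume.restrict (Ioc c d)).prod (volume.restrict (Ioc q r))) := by
    rw [MeasureTheory.Measure.prod_restrict]
    have h1 : IntegrableOn (Function.uncurry f) (Icc c d ×ˢ Icc q r) (volume.prod volume) :=
      hf.integrableOn_compact (μ := (volume.prod volume)) (isCompact_Icc.prod isCompact_Icc)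
    exact h1.mono_set (prod_mono Ioc_subset_Icc_self Ioc_subset_Icc_self)
  exact MeasureTheory.integral_integral_swap hint

end Helpers

/-! ### Matrix exponential lemmas, transported between norms -/

section LinftySide
open Matrix
attribute [local instance] Matrix.linftyOpNormedRing Matrix.linftyOpNormedAlgebra

theorem exp_slope_linfty (A : Matrix (Fin 3) (Fin 3) ℝ) (c t : ℝ) :
    Filter.Tendsto (slope (fun u : ℝ => NormedSpace.exp ((c * u) • A)) t)
      (nhdsWithin t {t}ᶜ) (nhds (c • (A * NormedSpace.exp ((c * t) • A)))) := by
  have h0 : HasDerivAt (fun u : ℝ => NormedSpace.exp (u • A))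
      (A * NormedSpace.exp ((c * t) • A)) (c * t) := hasDerivAt_exp_smul_const' A (c * t)
  have h1 : HasDerivAt (fun u : ℝ => c * u) c t := by
    simpa using (hasDerivAt_id t).const_mul c
  have h2 : HasDerivAt ((fun u : ℝ => NormedSpace.exp (u • A)) ∘ (fun u : ℝ => c * u))
      (c • (A * NormedSpace.exp ((c * t) • A))) t := by
    exact HasDerivAt.scomp (x := t) h0 h1
  exact hasDerivAt_iff_tendsto_slope.1 h2

theorem exp_cont_linfty : Continuous (fun A : Matrix (Fin 3) (Fin 3) ℝ => NormedSpace.exp A) :=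
  NormedSpace.exp_continuous

end LinftySide

/-! ### Main development, with the coordinatewise sup norm on matrices -/

noncomputable section
open scoped RealInnerProductSpace
open Matrix Set Filter MeasureTheory Topology
attribute [local instance] Matrix.normedAddCommGroup Matrix.normedSpace

theorem exp_hasDerivAt (A : M3) (c t : ℝ) :
    HasDerivAt (fun u : ℝ => expm ((c * u) • A)) (c • (A * expm ((c * t) • A))) t :=
  hasDerivAt_iff_tendsto_slope.2 (exp_slope_linfty A c t)

theorem exp_cont : Continuous (fun A : M3 => expm A) := exp_cont_linfty


section CompLemmas
variable {α : Type*} [TopologicalSpace α] {s : Set α}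

@[simp] lemma act_zero (A : M3) : act A 0 = 0 := map_zero (Matrix.toEuclideanLin A)

lemma ContinuousOn.cross3 {f g : α → E3} (hf : ContinuousOn f s) (hg : ContinuousOn g s) :
    ContinuousOn (fun x => cross (f x) (g x)) s := by
  have h := (continuous_bil crossB).comp_continuousOn (hf.prodMk hg)
  exact h

lemma ContinuousOn.act3 {f : α → M3} {g : α → E3} (hf : ContinuousOn f s)
    (hg : ContinuousOn g s) : ContinuousOn (fun x => act (f x) (g x)) s := by
  have h := (continuous_bil actB).comp_continuousOn (hf.prodMk hg)
  exact h

lemma ContinuousOn.mul3 {f g : α → M3} (hf : ContinuousOn f s) (hg : ContinuousOn g s) :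
    ContinuousOn (fun x => f x * g x) s := by
  have h := (continuous_bil mulB).comp_continuousOn (hf.prodMk hg)
  exact h

end CompLemmas

section DerivLemmas
variable {f g : ℝ → E3} {F G : ℝ → M3} {s : Set ℝ} {x : ℝ}

lemma HasDerivWithinAt.cross3 {f' g' : E3} (hf : HasDerivWithinAt f f' s x)
    (hg : HasDerivWithinAt g g' s x) :
    HasDerivWithinAt (fun y => cross (f y) (g y)) (cross f' (g x) + cross (f x) g') s x := by
  simpa using HasDerivWithinAt.bil crossB hf hg

lemma HasDerivWithinAt.act3 {F' : M3} {g' : E3} (hF : HasDerivWithinAt F F' s x)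
    (hg : HasDerivWithinAt g g' s x) :
    HasDerivWithinAt (fun y => act (F y) (g y)) (act F' (g x) + act (F x) g') s x := by
  simpa using HasDerivWithinAt.bil actB hF hg

lemma HasDerivWithinAt.mul3 {F' G' : M3} (hF : HasDerivWithinAt F F' s x)
    (hG : HasDerivWithinAt G G' s x) :
    HasDerivWithinAt (fun y => F y * G y) (F' * G x + F x * G') s x := by
  have h := HasDerivWithinAt.bil mulB hF hG
  simp only [mulB_apply] at h
  exact h

end DerivLemmas

/-- the switching sign function is interval integrable -/
lemma eps_intervalIntegrable (T : ℝ) (c d : ℝ) :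
    IntervalIntegrable (fun s : ℝ => ((-1 : ℝ) ^ (⌊s / T⌋))) MeasureTheory.volume c d := by
  apply IntervalIntegrable.mono_fun (intervalIntegrable_const (c := (1:ℝ)))
  · have hm : Measurable fun s : ℝ => ((-1 : ℝ) ^ (⌊s / T⌋)) := by
      have h1 : Measurable fun s : ℝ => ⌊s / T⌋ := Int.measurable_floor.comp (by fun_prop)
      exact (measurable_from_top (f := fun n : ℤ => ((-1:ℝ)^n))).comp h1
    exact hm.aestronglyMeasurable
  · refine Filter.Eventually.of_forall fun s => ?_
    show ‖(-1:ℝ) ^ ⌊s / T⌋‖ ≤ |(1:ℝ)|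
    rw [Real.norm_eq_abs, abs_one]
    rcases Int.even_or_odd ⌊s / T⌋ with h | h
    · rw [h.neg_one_zpow]; simp
    · rw [Odd.neg_one_zpow h]; simp

lemma sigma_continuous (T : ℝ) : Continuous (sigma T) :=
  intervalIntegral.continuous_primitive (fun c d => eps_intervalIntegrable T c d) 0

set_option maxHeartbeats 1000000

/-- Differentiation of the Lyapunov functional along trajectories of
`∂N/∂t = Σᵢ uᵢ(t) [F(t,ω)eᵢ] ∧ N`: wherever σ is differentiable,
`d/dt L(N(t,·)) = Σᵢ uᵢ(t) Hᵢ[t, N(t,·)]`. -/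
theorem stmt8 (a b : ℝ) (hab : a < b) (T : ℝ) (hT : 0 < T)
    (R R' : ℝ → Matrix (Fin 3) (Fin 3) ℝ)
    (hRderiv : ∀ ω ∈ Icc a b, HasDerivWithinAt R (R' ω) (Icc a b) ω)
    (hR'cont : ContinuousOn R' (Icc a b))
    (hRSO : ∀ ω ∈ Icc a b, IsSO (R ω))
    (u1 u2 : ℝ → ℝ)
    (hu1 : ContinuousOn u1 (Ici 0)) (hu2 : ContinuousOn u2 (Ici 0))
    (N Nω Ntω : ℝ → ℝ → E3)
    (hNcont : ContinuousOn (fun p : ℝ × ℝ => N p.1 p.2) (Ici 0 ×ˢ Icc a b))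
    (hNω : ∀ t ∈ Ici (0:ℝ), ∀ ω ∈ Icc a b, HasDerivWithinAt (N t) (Nω t ω) (Icc a b) ω)
    (hNωcont : ContinuousOn (fun p : ℝ × ℝ => Nω p.1 p.2) (Ici 0 ×ˢ Icc a b))
    (hNtω : ∀ t ∈ Ici (0:ℝ), ∀ ω ∈ Icc a b,
      HasDerivWithinAt (fun s => Nω s ω) (Ntω t ω) (Ici 0) t)
    (hNtωcont : ContinuousOn (fun p : ℝ × ℝ => Ntω p.1 p.2) (Ici 0 ×ˢ Icc a b))
    (hPDE : ∀ t ∈ Ici (0:ℝ), ∀ ω ∈ Icc a b,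
      HasDerivWithinAt (fun s => N s ω)
        (u1 t • cross (act (Fmat R T t ω) e1) (N t ω)
          + u2 t • cross (act (Fmat R T t ω) e2) (N t ω)) (Ici 0) t) :
    ∀ t ∈ Ici (0:ℝ), DifferentiableAt ℝ (sigma T) t →
      HasDerivWithinAt (fun s => Lfun a b (N s) (Nω s))
        (u1 t * Hfun a b R R' T t (N t) (Nω t) e1
          + u2 t * Hfun a b R R' T t (N t) (Nω t) e2) (Ici 0) t := by
  intro t₀ ht₀ _
  have h0t : (0:ℝ) ≤ t₀ := ht₀
  have hab' : a ≤ b := hab.le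
  have hRc : ContinuousOn R (Icc a b) := fun ω hω => (hRderiv ω hω).continuousWithinAt
  set RS : ℝ → ℝ → E3 := RHSfun u1 u2 R T N with hRSdef
  set RSW : ℝ → ℝ → E3 := RHSWfun u1 u2 R R' T N Nω with hRSWdef
  -- generic slicing of joint continuity
  have sliceT : ∀ {X : Type} [TopologicalSpace X], ∀ {f : ℝ × ℝ → X},
      ContinuousOn f (Ici 0 ×ˢ Icc a b) → ∀ t ∈ Ici (0:ℝ),
        ContinuousOn (fun w => f (t, w)) (Icc a b) := by
    intro X _ f hf t ht
    exact hf.comp (Continuous.continuousOn (continuous_const.prodMk continuous_id))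
      (fun w hw => mk_mem_prod ht hw)
  have sliceW : ∀ {X : Type} [TopologicalSpace X], ∀ {f : ℝ × ℝ → X},
      ContinuousOn f (Ici 0 ×ˢ Icc a b) → ∀ ω ∈ Icc a b,
        ContinuousOn (fun s => f (s, ω)) (Ici 0) := by
    intro X _ f hf ω hω
    exact hf.comp (Continuous.continuousOn (continuous_id.prodMk continuous_const))
      (fun s hs => mk_mem_prod hs hω)
  have hswap : ∀ {X : Type} [TopologicalSpace X] {f : ℝ × ℝ → X} {A B : Set ℝ},
      ContinuousOn f (A ×ˢ B) → ContinuousOn (fun p : ℝ × ℝ => f (p.2, p.1)) (B ×ˢ A) := by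
    intro X _ f A B hf
    exact hf.comp continuous_swap.continuousOn (fun p hp => mk_mem_prod hp.2 hp.1)
  -- continuity of building blocks
  have hexp_c : Continuous (fun p : ℝ × ℝ => expm ((sigma T p.1 * p.2) • Smat)) :=
    exp_cont.comp ((((sigma_continuous T).comp continuous_fst).mul continuous_snd).smul
      continuous_const)
  have hRc2 : ContinuousOn (fun p : ℝ × ℝ => R p.2) (Ici 0 ×ˢ Icc a b) :=
    hRc.comp continuous_snd.continuousOn (fun p hp => hp.2)
  have hR'c2 : ContinuousOn (fun p : ℝ × ℝ => R' p.2) (Ici 0 ×ˢ Icc a b) :=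
    hR'cont.comp continuous_snd.continuousOn (fun p hp => hp.2)
  have hFc : ContinuousOn (fun p : ℝ × ℝ => Fmat R T p.1 p.2) (Ici 0 ×ˢ Icc a b) :=
    hRc2.mul3 hexp_c.continuousOn
  have hFWc : ContinuousOn (fun p : ℝ × ℝ => Fmatω R R' T p.1 p.2) (Ici 0 ×ˢ Icc a b) := by
    have h2 : ContinuousOn (fun p : ℝ × ℝ => Smat * expm ((sigma T p.1 * p.2) • Smat))
        (Ici 0 ×ˢ Icc a b) := continuousOn_const.mul3 hexp_c.continuousOn
    have h3 : ContinuousOn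
        (fun p : ℝ × ℝ => R p.2 * (Smat * expm ((sigma T p.1 * p.2) • Smat)))
        (Ici 0 ×ˢ Icc a b) := hRc2.mul3 h2
    have h4 : ContinuousOn (fun p : ℝ × ℝ => R' p.2 * expm ((sigma T p.1 * p.2) • Smat))
        (Ici 0 ×ˢ Icc a b) := hR'c2.mul3 hexp_c.continuousOn
    exact h4.add ((((sigma_continuous T).comp continuous_fst).continuousOn).smul h3)
  -- derivative of Fmat in ω
  have hFd : ∀ (t : ℝ), ∀ ω ∈ Icc a b,
      HasDerivWithinAt (fun w => Fmat R T t w) (Fmatω R R' T t ω) (Icc a b) ω := by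
    intro t ω hω
    have hE := (exp_hasDerivAt Smat (sigma T t) ω).hasDerivWithinAt (s := Icc a b)
    have h := (hRderiv ω hω).mul3 hE
    simpa [Fmat, Fmatω, mul_smul_comm] using h
  -- rephrased PDE
  have hPDE' : ∀ t ∈ Ici (0:ℝ), ∀ ω ∈ Icc a b,
      HasDerivWithinAt (fun s => N s ω) (RS t ω) (Ici 0) t := fun t ht ω hω => hPDE t ht ω hω
  -- joint continuity of RS and RSW
  have hu1' : ContinuousOn (fun p : ℝ × ℝ => u1 p.1) (Ici 0 ×ˢ Icc a b) :=
    hu1.comp continuous_fst.continuousOn (fun p hp => hp.1)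
  have hu2' : ContinuousOn (fun p : ℝ × ℝ => u2 p.1) (Ici 0 ×ˢ Icc a b) :=
    hu2.comp continuous_fst.continuousOn (fun p hp => hp.1)
  have hcr1 : ContinuousOn (fun p : ℝ × ℝ => cross (act (Fmat R T p.1 p.2) e1) (N p.1 p.2))
      (Ici 0 ×ˢ Icc a b) := (hFc.act3 continuousOn_const).cross3 hNcont
  have hcr2 : ContinuousOn (fun p : ℝ × ℝ => cross (act (Fmat R T p.1 p.2) e2) (N p.1 p.2))
      (Ici 0 ×ˢ Icc a b) := (hFc.act3 continuousOn_const).cross3 hNcont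
  have hRSc : ContinuousOn (fun p : ℝ × ℝ => RS p.1 p.2) (Ici 0 ×ˢ Icc a b) := by
    simp only [hRSdef, RHSfun]
    exact (hu1'.smul hcr1).add (hu2'.smul hcr2)
  have hRSWc : ContinuousOn (fun p : ℝ × ℝ => RSW p.1 p.2) (Ici 0 ×ˢ Icc a b) := by
    have hcw1 : ContinuousOn
        (fun p : ℝ × ℝ => cross (act (Fmatω R R' T p.1 p.2) e1) (N p.1 p.2))
        (Ici 0 ×ˢ Icc a b) := (hFWc.act3 continuousOn_const).cross3 hNcont
    have hcw2 : ContinuousOn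
        (fun p : ℝ × ℝ => cross (act (Fmatω R R' T p.1 p.2) e2) (N p.1 p.2))
        (Ici 0 ×ˢ Icc a b) := (hFWc.act3 continuousOn_const).cross3 hNcont
    have hcn1 : ContinuousOn
        (fun p : ℝ × ℝ => cross (act (Fmat R T p.1 p.2) e1) (Nω p.1 p.2))
        (Ici 0 ×ˢ Icc a b) := (hFc.act3 continuousOn_const).cross3 hNωcont
    have hcn2 : ContinuousOn
        (fun p : ℝ × ℝ => cross (act (Fmat R T p.1 p.2) e2) (Nω p.1 p.2))
        (Ici 0 ×ˢ Icc a b) := (hFc.act3 continuousOn_const).cross3 hNωcont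
    simp only [hRSWdef, RHSWfun]
    exact (hu1'.smul (hcw1.add hcn1)).add (hu2'.smul (hcw2.add hcn2))
  -- ω-derivative of RS
  have hRSd : ∀ t ∈ Ici (0:ℝ), ∀ ω ∈ Icc a b,
      HasDerivWithinAt (fun w => RS t w) (RSW t ω) (Icc a b) ω := by
    intro t ht ω hω
    have hA1 : HasDerivWithinAt (fun w => act (Fmat R T t w) e1)
        (act (Fmatω R R' T t ω) e1) (Icc a b) ω := by
      simpa using (hFd t ω hω).act3 (hasDerivWithinAt_const ω (Icc a b) e1)
    have hA2 : HasDerivWithinAt (fun w => act (Fmat R T t w) e2)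
        (act (Fmatω R R' T t ω) e2) (Icc a b) ω := by
      simpa using (hFd t ω hω).act3 (hasDerivWithinAt_const ω (Icc a b) e2)
    have hC1 : HasDerivWithinAt (fun w => cross (act (Fmat R T t w) e1) (N t w))
        (cross (act (Fmatω R R' T t ω) e1) (N t ω) + cross (act (Fmat R T t ω) e1) (Nω t ω))
        (Icc a b) ω := by
      simpa using hA1.cross3 (hNω t ht ω hω)
    have hC2 : HasDerivWithinAt (fun w => cross (act (Fmat R T t w) e2) (N t w))
        (cross (act (Fmatω R R' T t ω) e2) (N t ω) + cross (act (Fmat R T t ω) e2) (Nω t ω))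
        (Icc a b) ω := by
      simpa using hA2.cross3 (hNω t ht ω hω)
    have h := (HasDerivWithinAt.const_smul (u1 t) hC1).add (HasDerivWithinAt.const_smul (u2 t) hC2)
    simp only [hRSdef, hRSWdef, RHSfun, RHSWfun]
    exact h
  -- t-derivative of the Lyapunov integrand
  have hD : ∀ t ∈ Ici (0:ℝ), ∀ ω ∈ Icc a b,
      HasDerivWithinAt (fun s => (1/2 : ℝ) * ‖Nω s ω‖^2 + 1 + ⟪N s ω, e3⟫)
        (⟪Nω t ω, Ntω t ω⟫ + ⟪RS t ω, e3⟫) (Ici 0) t := by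
    intro t ht ω hω
    have h1 : HasDerivWithinAt (fun s => ⟪Nω s ω, Nω s ω⟫)
        (⟪Nω t ω, Ntω t ω⟫ + ⟪Ntω t ω, Nω t ω⟫) (Ici 0) t :=
      HasDerivWithinAt.inner ℝ (hNtω t ht ω hω) (hNtω t ht ω hω)
    have h2 : HasDerivWithinAt (fun s => ⟪N s ω, e3⟫)
        (⟪N t ω, (0:E3)⟫ + ⟪RS t ω, e3⟫) (Ici 0) t :=
      HasDerivWithinAt.inner ℝ (hPDE' t ht ω hω) (hasDerivWithinAt_const t (Ici 0) e3)
    have h3 := ((h1.const_mul (1/2 : ℝ)).add_const 1).add h2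
    simp only [real_inner_self_eq_norm_sq] at h3
    refine h3.congr_deriv ?_
    rw [real_inner_comm (Ntω t ω) (Nω t ω)]
    simp
    ring
  -- joint continuity of the t-derivative of the integrand
  have hDc : ContinuousOn (fun p : ℝ × ℝ => ⟪Nω p.1 p.2, Ntω p.1 p.2⟫ + ⟪RS p.1 p.2, e3⟫)
      (Ici 0 ×ˢ Icc a b) :=
    (hNωcont.inner hNtωcont).add (hRSc.inner continuousOn_const)
  -- the would-be derivative function
  set ψ : ℝ → ℝ := fun s => ∫ ω in a..b, (⟪Nω s ω, Ntω s ω⟫ + ⟪RS s ω, e3⟫) with hψdef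
  have hψc : ContinuousOn ψ (Ici 0) := contOn_param hab' isClosed_Ici hDc
  -- key identity : L is a primitive of ψ
  have hLint : ∀ t ∈ Ici (0:ℝ),
      ContinuousOn (fun ω => (1/2:ℝ) * ‖Nω t ω‖^2 + 1 + ⟪N t ω, e3⟫) (Icc a b) := by
    intro t ht
    have hsl : ContinuousOn (fun w => Nω t w) (Icc a b) := sliceT hNωcont t ht
    have hsl2 : ContinuousOn (fun w => N t w) (Icc a b) := sliceT hNcont t ht
    exact ((continuousOn_const.mul ((hsl.norm).pow 2)).add continuousOn_const).add
      (hsl2.inner continuousOn_const)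
  have key : ∀ s ∈ Ici (0:ℝ),
      Lfun a b (N s) (Nω s) = Lfun a b (N 0) (Nω 0) + ∫ y in (0:ℝ)..s, ψ y := by
    intro s hs
    have hIccIci : Icc (0:ℝ) s ⊆ Ici 0 := fun y hy => hy.1
    have e1' : Lfun a b (N s) (Nω s) - Lfun a b (N 0) (Nω 0) =
        ∫ ω in a..b, (((1/2:ℝ) * ‖Nω s ω‖^2 + 1 + ⟪N s ω, e3⟫)
          - ((1/2:ℝ) * ‖Nω 0 ω‖^2 + 1 + ⟪N 0 ω, e3⟫)) := by
      rw [Lfun, Lfun, ← intervalIntegral.integral_sub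
        ((hLint s hs).intervalIntegrable_of_Icc hab')
        ((hLint 0 self_mem_Ici).intervalIntegrable_of_Icc hab')]
    have e2' : ∀ ω ∈ Icc a b,
        ((1/2:ℝ) * ‖Nω s ω‖^2 + 1 + ⟪N s ω, e3⟫)
          - ((1/2:ℝ) * ‖Nω 0 ω‖^2 + 1 + ⟪N 0 ω, e3⟫)
        = ∫ y in (0:ℝ)..s, (⟪Nω y ω, Ntω y ω⟫ + ⟪RS y ω, e3⟫) := by
      intro ω hω
      rw [ftc2_within hs (fun y hy => (hD y (hIccIci hy) ω hω).mono hIccIci)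
        (((sliceW hDc ω hω)).mono hIccIci)]
    have e3' : ∫ ω in a..b, (((1/2:ℝ) * ‖Nω s ω‖^2 + 1 + ⟪N s ω, e3⟫)
          - ((1/2:ℝ) * ‖Nω 0 ω‖^2 + 1 + ⟪N 0 ω, e3⟫))
        = ∫ ω in a..b, ∫ y in (0:ℝ)..s, (⟪Nω y ω, Ntω y ω⟫ + ⟪RS y ω, e3⟫) :=
      intervalIntegral.integral_congr (fun ω hω => e2' ω (by rwa [uIcc_of_le hab'] at hω))
    have e4' : ∫ ω in a..b, ∫ y in (0:ℝ)..s, (⟪Nω y ω, Ntω y ω⟫ + ⟪RS y ω, e3⟫)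
        = ∫ y in (0:ℝ)..s, ψ y := by
      refine interval_integral_swap hab' hs ?_
      exact (hswap hDc).mono (prod_mono subset_rfl hIccIci)
    have h5 := e1'.trans (e3'.trans e4')
    rw [← h5]
    ring
  -- Schwarz-type identity
  have primEq : ∀ t ∈ Ici (0:ℝ), ∀ x ∈ Icc a b,
      (∫ s in (0:ℝ)..t, Ntω s x) = ∫ s in (0:ℝ)..t, RSW s x := by
    intro t ht
    have hIci' : Icc (0:ℝ) t ⊆ Ici 0 := fun y hy => hy.1
    have hPc : ContinuousOn (fun x => ∫ s in (0:ℝ)..t, Ntω s x) (Icc a b) := by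
      refine contOn_param ht isClosed_Icc ?_
      exact (hswap hNtωcont).mono (prod_mono subset_rfl hIci')
    have hQc : ContinuousOn (fun x => ∫ s in (0:ℝ)..t, RSW s x) (Icc a b) := by
      refine contOn_param ht isClosed_Icc ?_
      exact (hswap hRSWc).mono (prod_mono subset_rfl hIci')
    have hAeq : ∀ ω ∈ Icc a b,
        ∫ x in a..ω, ((∫ s in (0:ℝ)..t, Ntω s x) - (∫ s in (0:ℝ)..t, RSW s x)) = 0 := by
      intro ω hω
      have hIccsub : Icc a ω ⊆ Icc a b := Icc_subset_Icc le_rfl hω.2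
      have hA1 : ∀ x ∈ Icc a b, (∫ s in (0:ℝ)..t, Ntω s x) = Nω t x - Nω 0 x := by
        intro x hx
        exact ftc2_within ht (fun y hy => (hNtω y (hIci' hy) x hx).mono hIci')
          ((sliceW hNtωcont x hx).mono hIci')
      have hA : ∫ x in a..ω, (∫ s in (0:ℝ)..t, Ntω s x)
          = (N t ω - N t a) - (N 0 ω - N 0 a) := by
        rw [intervalIntegral.integral_congr (g := fun x => Nω t x - Nω 0 x)
          (fun x hx => hA1 x (hIccsub (by rwa [uIcc_of_le hω.1] at hx)))]
        rw [intervalIntegral.integral_sub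
          (((sliceT hNωcont t ht).mono hIccsub).intervalIntegrable_of_Icc hω.1)
          (((sliceT hNωcont 0 self_mem_Ici).mono hIccsub).intervalIntegrable_of_Icc hω.1)]
        rw [ftc2_within hω.1 (fun x hx => (hNω t ht x (hIccsub hx)).mono hIccsub)
          (((sliceT hNωcont t ht).mono hIccsub)),
          ftc2_within hω.1 (fun x hx => (hNω 0 self_mem_Ici x (hIccsub hx)).mono hIccsub)
          (((sliceT hNωcont 0 self_mem_Ici).mono hIccsub))]
      have hB : ∫ x in a..ω, (∫ s in (0:ℝ)..t, RSW s x)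
          = (N t ω - N 0 ω) - (N t a - N 0 a) := by
        rw [← interval_integral_swap (f := fun s x => RSW s x) ht hω.1
          (hRSWc.mono (prod_mono hIci' hIccsub))]
        rw [intervalIntegral.integral_congr (g := fun s => RS s ω - RS s a)
          (fun s hs => ?_)]
        · rw [intervalIntegral.integral_sub
            (((sliceW hRSc ω hω).mono hIci').intervalIntegrable_of_Icc ht)
            (((sliceW hRSc a ⟨le_rfl, hab'⟩).mono hIci').intervalIntegrable_of_Icc ht)]
          rw [ftc2_within ht (fun s hs => (hPDE' s (hIci' hs) ω hω).mono hIci')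
            (((sliceW hRSc ω hω).mono hIci')),
            ftc2_within ht (fun s hs => (hPDE' s (hIci' hs) a ⟨le_rfl, hab'⟩).mono hIci')
            (((sliceW hRSc a ⟨le_rfl, hab'⟩).mono hIci'))]
        · have hs' : s ∈ Icc (0:ℝ) t := by rwa [uIcc_of_le ht] at hs
          exact ftc2_within hω.1
            (fun x hx => (hRSd s (hIci' hs') x (hIccsub hx)).mono hIccsub)
            ((sliceT hRSWc s (hIci' hs')).mono hIccsub)
      rw [intervalIntegral.integral_sub
        ((hPc.mono hIccsub).intervalIntegrable_of_Icc hω.1)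
        ((hQc.mono hIccsub).intervalIntegrable_of_Icc hω.1), hA, hB]
      abel
    intro x hx
    have h0 := eq_zero_of_integral_zero hab (hPc.sub hQc) hAeq x hx
    exact sub_eq_zero.1 h0
  have schwarz : ∀ ω ∈ Icc a b, Ntω t₀ ω = RSW t₀ ω := by
    intro ω hω
    have hIccIci : Icc (0:ℝ) (t₀+1) ⊆ Ici 0 := fun y hy => hy.1
    have hc1 : ContinuousOn (fun s => Ntω s ω - RSW s ω) (Icc 0 (t₀+1)) :=
      ((sliceW hNtωcont ω hω).sub (sliceW hRSWc ω hω)).mono hIccIci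
    have hz : ∀ t ∈ Icc (0:ℝ) (t₀+1), ∫ s in (0:ℝ)..t, (Ntω s ω - RSW s ω) = 0 := by
      intro t ht
      rw [intervalIntegral.integral_sub
        (((sliceW hNtωcont ω hω).mono (fun y hy => hy.1 : Icc (0:ℝ) t ⊆ Ici 0)).intervalIntegrable_of_Icc ht.1)
        (((sliceW hRSWc ω hω).mono (fun y hy => hy.1 : Icc (0:ℝ) t ⊆ Ici 0)).intervalIntegrable_of_Icc ht.1),
        primEq t ht.1 ω hω]
      exact sub_self _
    have := eq_zero_of_integral_zero (by linarith : (0:ℝ) < t₀+1) hc1 hz t₀ ⟨ht₀, by linarith⟩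
    exact sub_eq_zero.1 this
  -- derivative of the primitive
  have hmeasf : AEStronglyMeasurable ψ (volume.restrict (Ici 0)) :=
    hψc.aestronglyMeasurable measurableSet_Ici
  have hint : IntervalIntegrable ψ volume 0 t₀ :=
    ((hψc.mono Icc_subset_Ici_self).intervalIntegrable_of_Icc ht₀)
  have hGd : HasDerivWithinAt (fun s => ∫ y in (0:ℝ)..s, ψ y) (ψ t₀) (Ici 0) t₀ := by
    have hmeasR : StronglyMeasurableAtFilter ψ (𝓝[Ioi t₀] t₀) :=
      ⟨Ici 0, mem_of_superset self_mem_nhdsWithin (fun y hy => Set.mem_Ici.2 (le_trans ht₀ (le_of_lt hy))),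
        hmeasf⟩
    have hR : HasDerivWithinAt (fun s => ∫ y in (0:ℝ)..s, ψ y) (ψ t₀) (Ici t₀) t₀ :=
      intervalIntegral.integral_hasDerivWithinAt_right hint hmeasR
        ((hψc t₀ ht₀).mono (fun y hy => Set.mem_Ici.2 (le_trans ht₀ (le_of_lt hy))))
    rcases eq_or_lt_of_le (Set.mem_Ici.1 ht₀) with h0 | h0
    · rw [← h0] at hR ⊢
      exact hR
    · have hnh : Ici (0:ℝ) ∈ 𝓝 t₀ := Ici_mem_nhds h0
      have hca : ContinuousAt ψ t₀ := hψc.continuousAt hnh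
      have hmeasL : StronglyMeasurableAtFilter ψ (𝓝[Iic t₀] t₀) :=
        ⟨Ici 0, mem_nhdsWithin_of_mem_nhds hnh, hmeasf⟩
      have hL : HasDerivWithinAt (fun s => ∫ y in (0:ℝ)..s, ψ y) (ψ t₀) (Iic t₀) t₀ :=
        intervalIntegral.integral_hasDerivWithinAt_right hint hmeasL
          hca.continuousWithinAt
      exact (hR.union hL).mono (fun y _ => (le_total t₀ y).imp id id)
  -- value of ψ at t₀
  have hH1c : ContinuousOn (fun ω => ⟪Nω t₀ ω, cross (act (Fmatω R R' T t₀ ω) e1) (N t₀ ω)⟫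
      + ⟪e3, cross (act (Fmat R T t₀ ω) e1) (N t₀ ω)⟫) (Icc a b) := by
    have c1 : ContinuousOn (fun ω => cross (act (Fmatω R R' T t₀ ω) e1) (N t₀ ω)) (Icc a b) :=
      sliceT ((hFWc.act3 continuousOn_const).cross3 hNcont) t₀ ht₀
    have c2 : ContinuousOn (fun ω => cross (act (Fmat R T t₀ ω) e1) (N t₀ ω)) (Icc a b) :=
      sliceT hcr1 t₀ ht₀
    exact ((sliceT hNωcont t₀ ht₀).inner c1).add (continuousOn_const.inner c2)
  have hH2c : ContinuousOn (fun ω => ⟪Nω t₀ ω, cross (act (Fmatω R R' T t₀ ω) e2) (N t₀ ω)⟫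
      + ⟪e3, cross (act (Fmat R T t₀ ω) e2) (N t₀ ω)⟫) (Icc a b) := by
    have c1 : ContinuousOn (fun ω => cross (act (Fmatω R R' T t₀ ω) e2) (N t₀ ω)) (Icc a b) :=
      sliceT ((hFWc.act3 continuousOn_const).cross3 hNcont) t₀ ht₀
    have c2 : ContinuousOn (fun ω => cross (act (Fmat R T t₀ ω) e2) (N t₀ ω)) (Icc a b) :=
      sliceT hcr2 t₀ ht₀
    exact ((sliceT hNωcont t₀ ht₀).inner c1).add (continuousOn_const.inner c2)
  have hpw : ∀ ω ∈ Icc a b, ⟪Nω t₀ ω, Ntω t₀ ω⟫ + ⟪RS t₀ ω, e3⟫ =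
      u1 t₀ * (⟪Nω t₀ ω, cross (act (Fmatω R R' T t₀ ω) e1) (N t₀ ω)⟫
        + ⟪e3, cross (act (Fmat R T t₀ ω) e1) (N t₀ ω)⟫)
      + u2 t₀ * (⟪Nω t₀ ω, cross (act (Fmatω R R' T t₀ ω) e2) (N t₀ ω)⟫
        + ⟪e3, cross (act (Fmat R T t₀ ω) e2) (N t₀ ω)⟫) := by
    intro ω hω
    rw [schwarz ω hω]
    simp only [hRSdef, hRSWdef, RHSfun, RHSWfun]
    rw [inner_add_right, inner_add_left, real_inner_smul_right, real_inner_smul_right,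
      real_inner_smul_left, real_inner_smul_left, inner_add_right, inner_add_right,
      inner_cross_self, inner_cross_self,
      real_inner_comm (cross (act (Fmat R T t₀ ω) e1) (N t₀ ω)) e3,
      real_inner_comm (cross (act (Fmat R T t₀ ω) e2) (N t₀ ω)) e3]
    ring
  have hψval : ψ t₀ = u1 t₀ * Hfun a b R R' T t₀ (N t₀) (Nω t₀) e1
      + u2 t₀ * Hfun a b R R' T t₀ (N t₀) (Nω t₀) e2 := by
    have h1 : ψ t₀ = ∫ ω in a..b,
        (u1 t₀ * (⟪Nω t₀ ω, cross (act (Fmatω R R' T t₀ ω) e1) (N t₀ ω)⟫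
          + ⟪e3, cross (act (Fmat R T t₀ ω) e1) (N t₀ ω)⟫)
        + u2 t₀ * (⟪Nω t₀ ω, cross (act (Fmatω R R' T t₀ ω) e2) (N t₀ ω)⟫
          + ⟪e3, cross (act (Fmat R T t₀ ω) e2) (N t₀ ω)⟫)) :=
      intervalIntegral.integral_congr (fun ω hω => hpw ω (by rwa [uIcc_of_le hab'] at hω))
    rw [h1, intervalIntegral.integral_add
      ((continuousOn_const.fun_mul hH1c).intervalIntegrable_of_Icc hab')
      ((continuousOn_const.fun_mul hH2c).intervalIntegrable_of_Icc hab'),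
      intervalIntegral.integral_const_mul, intervalIntegral.integral_const_mul]
    rfl
  -- conclusion
  have final : HasDerivWithinAt (fun s => Lfun a b (N s) (Nω s)) (ψ t₀) (Ici 0) t₀ :=
    (hGd.const_add (Lfun a b (N 0) (Nω 0))).congr
      (fun s hs => (key s hs)) (key t₀ ht₀)
  rw [← hψval]
  exact final
end
end

section
/- Let m ∈ S² and R ∈ SO(3) with R m = −e₃. Let V := span(e₁, e₂) ⊂ ℝ³ and let P : ℝ³ → V be the orthogonal projection onto V. Then the kernel of the linear map V → V, v ↦ P(R v), equals V ∩ ℝm; consequently, the linear map V → V, v ↦ P(Rᵀ v), is bijective if and only if ⟨m, e₃⟩ ≠ 0. -/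
noncomputable section

open scoped RealInnerProductSpace
open Matrix Set Filter

attribute [local instance] Matrix.normedAddCommGroup Matrix.normedSpace

/-- The plane V = span(e₁, e₂) ⊂ ℝ³. -/
def Vplane : Submodule ℝ E3 := Submodule.span ℝ ({e1, e2} : Set E3)

lemma act_act (A B : Matrix (Fin 3) (Fin 3) ℝ) (x : E3) : act A (act B x) = act (A * B) x := by
  simp [act, Matrix.toEuclideanLin_apply, Matrix.mulVec_mulVec]

lemma act_one (x : E3) : act 1 x = x := by
  ext i
  show (1 : Matrix (Fin 3) (Fin 3) ℝ).mulVec x.ofLp i = x.ofLp i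
  simp [Matrix.one_mulVec]

lemma act_smul (A : Matrix (Fin 3) (Fin 3) ℝ) (c : ℝ) (x : E3) :
    act A (c • x) = c • act A x := by
  simp [act, _root_.map_smul]

lemma mem_Vplane_iff (x : E3) : x ∈ Vplane ↔ x 2 = 0 := by
  constructor
  · intro hx
    induction hx using Submodule.span_induction with
    | mem u hu =>
      rcases hu with h | h <;> subst h <;>
        simp [e1, e2, EuclideanSpace.single_apply]
    | zero => rfl
    | add u v _ _ hu hv => show u 2 + v 2 = 0; rw [hu, hv, add_zero]
    | smul c u _ hu => show c * u 2 = 0; rw [hu, mul_zero]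
  · intro hx
    have hxe : x = x 0 • e1 + x 1 • e2 := by
      ext i
      fin_cases i <;>
        simp [e1, e2, EuclideanSpace.single_apply, hx]
    rw [hxe]
    exact Submodule.add_mem _
      (Submodule.smul_mem _ _ (Submodule.subset_span (by simp)))
      (Submodule.smul_mem _ _ (Submodule.subset_span (by simp)))

lemma proj_eq_zero_iff (x : E3) :
    (Submodule.orthogonalProjectionOnto Vplane x : E3) = 0 ↔ x 0 = 0 ∧ x 1 = 0 := by
  rw [show ((Submodule.orthogonalProjectionOnto Vplane x : E3) = 0 ↔ Submodule.orthogonalProjectionOnto Vplane x = 0) from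
    ⟨fun h => Subtype.ext h, fun h => congrArg _ h⟩, Submodule.orthogonalProjectionOnto_eq_zero_iff,
    Submodule.mem_orthogonal]
  constructor
  · intro h
    constructor
    · have := h e1 (Submodule.subset_span (by simp))
      simpa [e1, EuclideanSpace.inner_single_left] using this
    · have := h e2 (Submodule.subset_span (by simp))
      simpa [e2, EuclideanSpace.inner_single_left] using this
  · rintro ⟨h0, h1⟩ u hu
    induction hu using Submodule.span_induction with
    | mem u hu =>
      rcases hu with h | h <;> subst h <;>
        simp [e1, e2, EuclideanSpace.inner_single_left, h0, h1]
    | zero => simp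
    | add u v _ _ hu hv => rw [inner_add_left, hu, hv, add_zero]
    | smul c u _ hu => rw [real_inner_smul_left, hu, mul_zero]

/-- Key linear-algebra step of Proposition 3: if `R ∈ SO(3)` sends `m ∈ S²` to `−e₃`,
then the kernel of `v ↦ P(Rv)` on V equals `V ∩ ℝm`, and `v ↦ P(Rᵀv)` is bijective on V
iff `⟨m, e₃⟩ ≠ 0`. -/
theorem stmt11 (m : E3) (hm : ‖m‖ = 1)
    (R : Matrix (Fin 3) (Fin 3) ℝ) (hR : IsSO R) (hRm : act R m = -e3) :
    (∀ v ∈ Vplane,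
      ((Submodule.orthogonalProjectionOnto Vplane (act R v) : E3) = 0 ↔ v ∈ Submodule.span ℝ ({m} : Set E3))) ∧
    (Function.Bijective
        (fun v : Vplane => Submodule.orthogonalProjectionOnto Vplane (act Rᵀ (v : E3)))
      ↔ ⟪m, e3⟫ ≠ 0) := by
  have hR1 : Rᵀ * R = 1 := hR.1
  have hR2 : R * Rᵀ = 1 := mul_eq_one_comm.mp hR1
  have hTR : ∀ x : E3, act Rᵀ (act R x) = x := fun x => by
    rw [act_act, hR1, act_one]
  have hRT : ∀ x : E3, act R (act Rᵀ x) = x := fun x => by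
    rw [act_act, hR2, act_one]
  have hRTe3 : act Rᵀ e3 = -m := by
    have : act Rᵀ (act R m) = m := hTR m
    rw [hRm] at this
    have h2 : act Rᵀ (-e3) = -(act Rᵀ e3) := by simp [act, _root_.map_neg]
    rw [h2] at this
    exact neg_eq_iff_eq_neg.mp this
  have hm2 : m 2 = -(R 2 2) := by
    have := congrArg (fun y : E3 => y.ofLp 2) hRTe3
    dsimp only at this
    have h2 : act Rᵀ e3 2 = R 2 2 := by
      show (Rᵀ).mulVec e3.ofLp 2 = R 2 2
      simp [Matrix.mulVec, dotProduct, Fin.sum_univ_three, e3, EuclideanSpace.single_apply,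
        Matrix.transpose_apply]
    rw [h2] at this
    have : R 2 2 = -m 2 := this
    linarith
  have hinner : ⟪m, e3⟫ = m 2 := by
    simp [e3, EuclideanSpace.inner_single_right]
  -- n := R e3
  set n : E3 := act R e3 with hn
  have hn2 : n 2 = R 2 2 := by
    show R.mulVec e3.ofLp 2 = R 2 2
    simp [Matrix.mulVec, dotProduct, Fin.sum_univ_three, e3, EuclideanSpace.single_apply]
  have hTn : act Rᵀ n = e3 := hTR e3
  have hne : n ≠ 0 := by
    intro h
    have : act Rᵀ n = 0 := by rw [h]; simp [act, _root_.map_zero]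
    rw [hTn] at this
    have := congrArg (fun y : E3 => y.ofLp 2) this
    simp [e3, EuclideanSpace.single_apply] at this
  constructor
  · intro v _
    constructor
    · intro h
      obtain ⟨h0, h1⟩ := (proj_eq_zero_iff _).mp h
      set cv : ℝ := act R v 2 with hcv
      have hRv : act R v = cv • e3 := by
        ext i
        fin_cases i <;>
          simp [h0, h1, e3, EuclideanSpace.single_apply, hcv]
      have hvm : v = cv • (-m) := by
        calc v = act Rᵀ (act R v) := (hTR v).symm
        _ = act Rᵀ (cv • e3) := by rw [← hRv]
        _ = cv • act Rᵀ e3 := act_smul _ _ _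
        _ = cv • (-m) := by rw [hRTe3]
      rw [Submodule.mem_span_singleton]
      exact ⟨-cv, by rw [hvm, smul_neg, neg_smul]⟩
    · intro h
      obtain ⟨c, rfl⟩ := Submodule.mem_span_singleton.mp h
      rw [act_smul, hRm]
      apply (proj_eq_zero_iff _).mpr
      constructor <;> simp [e3, EuclideanSpace.single_apply]
  · -- bijectivity part
    have hVfin : FiniteDimensional ℝ Vplane := by infer_instance
    set L : Vplane →ₗ[ℝ] Vplane :=
      (Submodule.orthogonalProjectionOnto Vplane).toLinearMap ∘ₗ
        ((Matrix.toEuclideanLin Rᵀ) ∘ₗ Vplane.subtype) with hL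
    have hfun : (fun v : Vplane => Submodule.orthogonalProjectionOnto Vplane (act Rᵀ (v : E3))) = ⇑L := rfl
    rw [hfun, hinner]
    have hbij : Function.Bijective ⇑L ↔ Function.Injective ⇑L :=
      ⟨fun h => h.1, fun h => ⟨h, (LinearMap.injective_iff_surjective).mp h⟩⟩
    rw [hbij]
    constructor
    · -- injective → m 2 ≠ 0
      intro hinj hm2z
      have hnV : n ∈ Vplane := (mem_Vplane_iff n).mpr (by rw [hn2]; linarith)
      have hLn : L ⟨n, hnV⟩ = 0 := by
        apply Subtype.ext
        show (Submodule.orthogonalProjectionOnto Vplane (act Rᵀ n) : E3) = 0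
        rw [hTn]
        exact (proj_eq_zero_iff _).mpr (by constructor <;> simp [e3, EuclideanSpace.single_apply])
      have : (⟨n, hnV⟩ : Vplane) = 0 := hinj (by rw [hLn]; simp [hL, act, _root_.map_zero])
      exact hne (by simpa using congrArg Subtype.val this)
    · -- m 2 ≠ 0 → injective
      intro hm2z
      rw [← LinearMap.ker_eq_bot, LinearMap.ker_eq_bot']
      rintro ⟨v, hv⟩ h
      have h' : (Submodule.orthogonalProjectionOnto Vplane (act Rᵀ v) : E3) = 0 :=
        congrArg Subtype.val h
      obtain ⟨h0, h1⟩ := (proj_eq_zero_iff _).mp h'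
      set c : ℝ := act Rᵀ v 2 with hc
      have hRv : act Rᵀ v = c • e3 := by
        ext i
        fin_cases i <;>
          simp [h0, h1, e3, EuclideanSpace.single_apply, hc]
      have hvcn : v = c • n := by
        calc v = act R (act Rᵀ v) := (hRT v).symm
        _ = act R (c • e3) := by rw [hRv]
        _ = c • n := act_smul _ _ _
      have hv2 : v 2 = 0 := (mem_Vplane_iff v).mp hv
      have : c * R 2 2 = 0 := by
        have := congrArg (fun y : E3 => y.ofLp 2) hvcn
        dsimp only at this
        have hcn2 : (c • n) 2 = c * n 2 := rfl
        rw [hcn2, hn2] at this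
        rw [← this]; exact hv2
      have hc0 : c = 0 := by
        rcases mul_eq_zero.mp this with h | h
        · exact h
        · exact absurd (by linarith : m 2 = 0) hm2z
      apply Subtype.ext
      show v = 0
      rw [hvcn, hc0, zero_smul]
end
end
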